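/- arXiv:2201.12912 — 12 statements merged into one kernel-verified Lean document; each statement's English description precedes it below -/
import Mathlib

section
/- Let X be an infinite-dimensional complex Banach space, let A be an associative algebra (over the complex numbers), and let φ: B(X) → A be an additive map such that φ(P)φ(Q) = D whenever PQ = C, where C is a fixed bounded operator on X of finite rank k and D is a fixed element of A. Then φ preserves the zero product: for all bounded operators P, Q on X, PQ = 0 implies φ(P)φ(Q) = 0. -/
open Submodule

namespace Stmt0Aux

variable {X : Type*} [NormedAddCommGroup X] [NormedSpace ℂ X]


/-- rank one operator -/
noncomputable def rk (f : X →L[ℂ] ℂ) (v : X) : X →L[ℂ] X := f.smulRight v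

lemma rk_apply (f : X →L[ℂ] ℂ) (v x : X) : rk f v x = f x • v := rfl

/-- U1: biorthogonal continuous functionals vanishing on a closed subspace. -/
lemma exists_biorth (Z : Submodule ℂ X) (hZ : IsClosed (Z : Set X)) {n : ℕ} (v : Fin n → X)
    (hv : ∀ c : Fin n → ℂ, (∑ i, c i • v i) ∈ Z → ∀ i, c i = 0) :
    ∃ ξ : Fin n → (X →L[ℂ] ℂ), (∀ i j, ξ i (v j) = if i = j then 1 else 0) ∧
      (∀ i, ∀ z ∈ Z, ξ i z = 0) := by
  haveI : IsClosed (Z : Set X) := hZ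
  set Y := X ⧸ Z
  let mkC : X →L[ℂ] Y := (Z.mkQ).mkContinuous 1 (by
    intro x
    simpa using Submodule.Quotient.norm_mk_le Z x)
  have mkC_apply : ∀ x : X, mkC x = Submodule.Quotient.mk x := fun x => rfl
  let vb : Fin n → Y := fun i => Submodule.Quotient.mk (v i)
  have hli : LinearIndependent ℂ vb := by
    rw [Fintype.linearIndependent_iff]
    intro c hc i
    refine hv c ?_ i
    rw [← Submodule.Quotient.mk_eq_zero Z, ← Z.mkQ_apply, map_sum]
    simpa [Z.mkQ_apply] using hc
  haveI : FiniteDimensional ℂ (span ℂ (Set.range vb)) :=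
    FiniteDimensional.span_of_finite ℂ (Set.finite_range vb)
  let b : Module.Basis (Fin n) ℂ (span ℂ (Set.range vb)) := Module.Basis.span hli
  have hb : ∀ j, (b j : Y) = vb j := fun j => congrArg Subtype.val (Module.Basis.span_apply hli j)
  let coordC : Fin n → (span ℂ (Set.range vb)) →L[ℂ] ℂ := fun i =>
    LinearMap.toContinuousLinearMap (b.coord i)
  choose g hg _ using fun i => exists_extension_norm_eq (span ℂ (Set.range vb)) (coordC i)
  refine ⟨fun i => (g i).comp mkC, ?_, ?_⟩
  · intro i j
    have hmem : vb j ∈ span ℂ (Set.range vb) := subset_span (Set.mem_range_self j)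
    have : (g i) (vb j) = coordC i ⟨vb j, hmem⟩ := hg i ⟨vb j, hmem⟩
    have hbj : (⟨vb j, hmem⟩ : span ℂ (Set.range vb)) = b j := by
      ext; simp [hb j]
    simp only [ContinuousLinearMap.comp_apply, mkC_apply]
    rw [show (Submodule.Quotient.mk (v j) : Y) = vb j from rfl, this, hbj]
    have : coordC i (b j) = b.coord i (b j) := rfl
    rw [this, Module.Basis.coord_apply, b.repr_self]
    simp [Finsupp.single_apply, eq_comm]
  · intro i z hz
    have : mkC z = 0 := by
      rw [mkC_apply, Submodule.Quotient.mk_eq_zero]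
      exact hz
    simp [ContinuousLinearMap.comp_apply, this]



/-- U2 -/
lemma exists_not_mem {M : Type*} [AddCommGroup M] [Module ℂ M] (W F : Submodule ℂ M)
    (hW : ¬ FiniteDimensional ℂ W) (hF : FiniteDimensional ℂ F) : ∃ w, w ∈ W ∧ w ∉ F := by
  by_contra hcon
  push_neg at hcon
  exact hW (Submodule.finiteDimensional_of_le (fun x hx => hcon x hx))

/-- extension of finite-dimensionality -/
lemma findim_ext {M : Type*} [AddCommGroup M] [Module ℂ M] (N : Submodule ℂ M)
    (h1 : FiniteDimensional ℂ N) (h2 : FiniteDimensional ℂ (M ⧸ N)) :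
    FiniteDimensional ℂ M := by
  classical
  obtain ⟨s, hs⟩ := Module.Finite.fg_top (R := ℂ) (M := M ⧸ N)
  have hsurj := Submodule.mkQ_surjective N
  choose f hf using fun y : M ⧸ N => hsurj y
  have hmap : Submodule.map N.mkQ (span ℂ (f '' ↑s)) = ⊤ := by
    rw [Submodule.map_span, ← Set.image_comp]
    have h1 : (⇑N.mkQ ∘ f) '' (↑s : Set (M ⧸ N)) = ↑s := by
      ext y
      simp [Function.comp_apply, hf]
    rw [h1, hs]
  have hsup : N ⊔ span ℂ (f '' ↑s) = ⊤ := by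
    have := congrArg (Submodule.comap N.mkQ) hmap
    rwa [Submodule.comap_map_mkQ, Submodule.comap_top] at this
  have hNfg : N.FG := (Module.Finite.iff_fg (N := N)).mp h1
  have htop : (⊤ : Submodule ℂ M).FG := by
    rw [← hsup]
    exact Submodule.FG.sup hNfg ⟨(s.image f), by simp⟩
  exact Module.finite_def.mpr htop

/-- U3 -/
lemma inf_ker_infinite (W : Submodule ℂ X) (hW : ¬FiniteDimensional ℂ W) {r : ℕ}
    (ξ : Fin r → (X →L[ℂ] ℂ)) :
    ¬ FiniteDimensional ℂ ↥(W ⊓ ⨅ i, LinearMap.ker (ξ i : X →ₗ[ℂ] ℂ)) := by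
  intro hfin
  set T : ↥W →ₗ[ℂ] (Fin r → ℂ) :=
    LinearMap.pi (fun i => ((ξ i).toLinearMap).comp W.subtype) with hT
  have hker : ∀ w : ↥W, w ∈ LinearMap.ker T → (w : X) ∈ W ⊓ ⨅ i, LinearMap.ker (ξ i : X →ₗ[ℂ] ℂ) := by
    intro w hw
    refine Submodule.mem_inf.mpr ⟨w.2, (Submodule.mem_iInf _).mpr fun i => ?_⟩
    have h0 : T w = 0 := LinearMap.mem_ker.mp hw
    have := congrFun h0 i
    simpa [hT] using this
  have hinj : Function.Injective
      (fun w : LinearMap.ker T =>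
        (⟨(w : ↥W), hker w w.2⟩ : ↥(W ⊓ ⨅ i, LinearMap.ker (ξ i : X →ₗ[ℂ] ℂ)))) := by
    intro a b hab
    have h2 := congrArg Subtype.val hab
    exact Subtype.ext (Subtype.ext h2)
  have hkerfin : FiniteDimensional ℂ (LinearMap.ker T) := by
    let J : LinearMap.ker T →ₗ[ℂ] ↥(W ⊓ ⨅ i, LinearMap.ker (ξ i : X →ₗ[ℂ] ℂ)) :=
      { toFun := fun w => ⟨(w : ↥W), hker w w.2⟩
        map_add' := by intros; rfl
        map_smul' := by intros; rfl }
    exact FiniteDimensional.of_injective J hinj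
  haveI : FiniteDimensional ℂ (↥W ⧸ LinearMap.ker T) := by
    haveI : FiniteDimensional ℂ (LinearMap.range T) := inferInstance
    exact Module.Finite.equiv (T.quotKerEquivRange).symm
  exact hW (findim_ext (LinearMap.ker T) hkerfin inferInstance)




/-- U4: two vectors, killed by the ξ's, independent modulo a closed subspace `N`
of infinite codimension; given a biorthogonal system (u, ξ). -/
lemma exists_two_indep {r : ℕ} (N : Submodule ℂ X)
    (hq : ¬FiniteDimensional ℂ (X ⧸ N))
    (ξ : Fin r → (X →L[ℂ] ℂ)) (u : Fin r → X)
    (hbi : ∀ i j, ξ i (u j) = if i = j then 1 else 0) :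
    ∃ y₁ y₂ : X, (∀ a, ξ a y₁ = 0) ∧ (∀ a, ξ a y₂ = 0) ∧
      (∀ c₁ c₂ : ℂ, c₁ • y₁ + c₂ • y₂ ∈ N → c₁ = 0 ∧ c₂ = 0) := by
  classical
  set K : Submodule ℂ X := ⨅ i, LinearMap.ker (ξ i : X →ₗ[ℂ] ℂ) with hK
  have hKsup : K ⊔ span ℂ (Set.range u) = ⊤ := by
    rw [Submodule.eq_top_iff']
    intro x
    have hx1 : x - ∑ a, ξ a x • u a ∈ K := by
      rw [hK, Submodule.mem_iInf]
      intro b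
      rw [LinearMap.mem_ker]
      have : (ξ b) (∑ a, ξ a x • u a) = ξ b x := by
        rw [map_sum]
        have : ∀ a, ξ b (ξ a x • u a) = ξ a x * ξ b (u a) := by
          intro a; rw [map_smul]; rfl
        rw [Finset.sum_congr rfl (fun a _ => this a)]
        simp [hbi]
      simp only [ContinuousLinearMap.coe_coe, map_sub, this, sub_self]
    have hx2 : (∑ a, ξ a x • u a) ∈ span ℂ (Set.range u) := by
      apply Submodule.sum_mem
      intro a _
      exact Submodule.smul_mem _ _ (Submodule.subset_span (Set.mem_range_self a))
    have := Submodule.add_mem_sup hx1 hx2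
    simpa using this
  set W' : Submodule ℂ (X ⧸ N) := Submodule.map N.mkQ K with hW'
  have hW'inf : ¬ FiniteDimensional ℂ W' := by
    intro hfin
    apply hq
    have htop : W' ⊔ Submodule.map N.mkQ (span ℂ (Set.range u)) = ⊤ := by
      rw [hW', ← Submodule.map_sup, hKsup, Submodule.map_top, Submodule.range_mkQ]
    haveI : FiniteDimensional ℂ (Submodule.map N.mkQ (span ℂ (Set.range u))) := by
      rw [Submodule.map_span]
      exact FiniteDimensional.span_of_finite ℂ ((Set.finite_range u).image _)
    haveI : FiniteDimensional ℂ ↥(W' ⊔ Submodule.map N.mkQ (span ℂ (Set.range u))) :=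
      Submodule.finiteDimensional_sup _ _
    rw [htop] at this
    exact Module.Finite.equiv (Submodule.topEquiv (R := ℂ) (M := X ⧸ N))
  obtain ⟨w1, hw1W, hw1⟩ := exists_not_mem W' ⊥ hW'inf inferInstance
  have hw1ne : w1 ≠ 0 := by simpa using hw1
  obtain ⟨w2, hw2W, hw2⟩ := exists_not_mem W' (span ℂ {w1}) hW'inf
    (FiniteDimensional.span_of_finite ℂ (Set.finite_singleton w1))
  obtain ⟨y₁, hy₁K, hy₁⟩ := Submodule.mem_map.mp hw1W
  obtain ⟨y₂, hy₂K, hy₂⟩ := Submodule.mem_map.mp hw2W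
  have hker : ∀ y, y ∈ K → ∀ a, ξ a y = 0 := by
    intro y hy a
    exact LinearMap.mem_ker.mp ((Submodule.mem_iInf _).mp hy a)
  refine ⟨y₁, y₂, hker _ hy₁K, hker _ hy₂K, ?_⟩
  intro c₁ c₂ hc
  have hq0 : c₁ • w1 + c₂ • w2 = 0 := by
    rw [← hy₁, ← hy₂, ← map_smul, ← map_smul, ← map_add, N.mkQ_apply,
      Submodule.Quotient.mk_eq_zero]
    exact hc
  have hc₂ : c₂ = 0 := by
    by_contra hne
    apply hw2
    rw [Submodule.mem_span_singleton]
    refine ⟨c₂⁻¹ * -c₁, ?_⟩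
    have h5 : c₂ • w2 = -c₁ • w1 := by
      rw [neg_smul]
      exact eq_neg_of_add_eq_zero_right hq0
    calc (c₂⁻¹ * -c₁) • w1 = c₂⁻¹ • (-c₁ • w1) := by rw [mul_smul]
    _ = c₂⁻¹ • (c₂ • w2) := by rw [h5]
    _ = w2 := by rw [smul_smul, inv_mul_cancel₀ hne, one_smul]
  rw [hc₂, zero_smul, add_zero] at hq0
  have hc₁ : c₁ = 0 := by
    rcases smul_eq_zero.mp hq0 with h | h
    · exact h
    · exact absurd h hw1ne
  exact ⟨hc₁, hc₂⟩




/-- decomposition of a finite-rank operator -/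
lemma C_decomp (C : X →L[ℂ] X) {k : ℕ}
    (hCfin : FiniteDimensional ℂ (LinearMap.range (C : X →ₗ[ℂ] X)))
    (hCrank : Module.finrank ℂ (LinearMap.range (C : X →ₗ[ℂ] X)) = k) :
    ∃ (e : Fin k → X) (f : Fin k → (X →L[ℂ] ℂ)), C = ∑ i, rk (f i) (e i) := by
  classical
  set V := LinearMap.range (C : X →ₗ[ℂ] X) with hV
  let b : Module.Basis (Fin k) ℂ V := Module.finBasisOfFinrankEq ℂ V hCrank
  have hmem : ∀ x, C x ∈ V := fun x => LinearMap.mem_range_self _ x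
  let Cr : X →L[ℂ] V := C.codRestrict V hmem
  let f : Fin k → (X →L[ℂ] ℂ) := fun i =>
    (LinearMap.toContinuousLinearMap (b.coord i)).comp Cr
  refine ⟨fun i => (b i : X), f, ?_⟩
  ext x
  have hrepr : ∑ i, b.repr (Cr x) i • (b i : X) = ((Cr x : V) : X) := by
    have := b.sum_repr (Cr x)
    calc ∑ i, b.repr (Cr x) i • (b i : X) = ((∑ i, b.repr (Cr x) i • b i : V) : X) := by
          push_cast [Submodule.coe_sum]
          rfl
    _ = ((Cr x : V) : X) := by rw [this]
  have : (∑ i, rk (f i) ((b i : X))) x = ∑ i, b.repr (Cr x) i • (b i : X) := by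
    rw [ContinuousLinearMap.sum_apply]
    apply Finset.sum_congr rfl
    intro i _
    rfl
  rw [this, hrepr]
  rfl




variable {A : Type*} [Ring A]

/-- Base lemma: the 2×2 grid argument. -/
lemma base (φ : (X →L[ℂ] X) →+ A) (C : X →L[ℂ] X) (D : A)
    (h : ∀ P Q : X →L[ℂ] X, P * Q = C → φ P * φ Q = D)
    {k : ℕ} (e : Fin k → X) (f : Fin k → (X →L[ℂ] ℂ)) (hC : C = ∑ i, rk (f i) (e i))
    (P Q : X →L[ℂ] X) (hPQ : P * Q = 0)
    (u : Fin k → X) (ξ : Fin k → (X →L[ℂ] ℂ))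
    (hu : ∀ i, P (u i) = 0) (hξ : ∀ i x, ξ i (Q x) = 0)
    (hbi : ∀ i j, ξ i (u j) = if i = j then 1 else 0) :
    φ P * φ Q = 0 := by
  classical
  set S : X →L[ℂ] X := ∑ i, rk (f i) (u i) with hS
  set R : X →L[ℂ] X := ∑ i, rk (ξ i) (e i) with hR
  have hRS : R * S = C := by
    ext x
    rw [hC]
    have hSx : S x = ∑ i, f i x • u i := by
      rw [hS, ContinuousLinearMap.sum_apply]
      rfl
    have : R (S x) = ∑ j, ξ j (S x) • e j := by
      rw [hR, ContinuousLinearMap.sum_apply]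
      rfl
    rw [ContinuousLinearMap.mul_apply, this]
    have hcoef : ∀ j, ξ j (S x) = f j x := by
      intro j
      rw [hSx, map_sum]
      have : ∀ i, ξ j (f i x • u i) = f i x * ξ j (u i) := by
        intro i; rw [map_smul]; rfl
      rw [Finset.sum_congr rfl (fun i _ => this i)]
      simp [hbi]
    rw [Finset.sum_congr rfl (fun j _ => by rw [hcoef j])]
    rw [ContinuousLinearMap.sum_apply]
    rfl
  have hPS : P * S = 0 := by
    ext x
    have hSx : S x = ∑ i, f i x • u i := by
      rw [hS, ContinuousLinearMap.sum_apply]; rfl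
    rw [ContinuousLinearMap.mul_apply, hSx, map_sum]
    simp [hu]
  have hRQ : R * Q = 0 := by
    ext x
    rw [ContinuousLinearMap.mul_apply, hR, ContinuousLinearMap.sum_apply]
    simp [rk_apply, hξ]
  -- four grid products
  have g11 : (R + P) * (S + Q) = C := by
    calc (R + P) * (S + Q) = R * S + R * Q + (P * S + P * Q) := by noncomm_ring
      _ = C := by rw [hRS, hPS, hRQ, hPQ]; simp
  have g12 : (R + P) * (S + Q + Q) = C := by
    calc (R + P) * (S + Q + Q)
        = R * S + P * S + (R * Q + P * Q) + (R * Q + P * Q) := by noncomm_ring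
      _ = C := by rw [hRS, hPS, hRQ, hPQ]; simp
  have g21 : (R + P + P) * (S + Q) = C := by
    calc (R + P + P) * (S + Q)
        = R * S + R * Q + (P * S + P * Q) + (P * S + P * Q) := by noncomm_ring
      _ = C := by rw [hRS, hPS, hRQ, hPQ]; simp
  have g22 : (R + P + P) * (S + Q + Q) = C := by
    calc (R + P + P) * (S + Q + Q)
        = R * S + (R * Q + R * Q) + (P * S + P * S)
          + (P * Q + P * Q + P * Q + P * Q) := by noncomm_ring
      _ = C := by rw [hRS, hPS, hRQ, hPQ]; simp
  have e11 : (φ R + φ P) * (φ S + φ Q) = D := by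
    rw [← map_add, ← map_add]; exact h _ _ g11
  have e12 : (φ R + φ P) * (φ S + φ Q + φ Q) = D := by
    rw [← map_add, ← map_add, ← map_add]; exact h _ _ g12
  have e21 : (φ R + φ P + φ P) * (φ S + φ Q) = D := by
    rw [← map_add, ← map_add, ← map_add]; exact h _ _ g21
  have e22 : (φ R + φ P + φ P) * (φ S + φ Q + φ Q) = D := by
    rw [← map_add, ← map_add, ← map_add, ← map_add]; exact h _ _ g22
  have key : φ P * φ Q =
      ((φ R + φ P + φ P) * (φ S + φ Q + φ Q) + (φ R + φ P) * (φ S + φ Q))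
      - ((φ R + φ P) * (φ S + φ Q + φ Q) + (φ R + φ P + φ P) * (φ S + φ Q)) := by
    noncomm_ring
  rw [key, e11, e12, e21, e22, sub_self]




/-- the two averaging operators used for splitting -/
noncomputable def av (μ₁ μ₂ : X →L[ℂ] ℂ) (m₁ m₂ : X) : X →L[ℂ] X :=
  (2⁻¹ : ℂ) • (1 + rk μ₁ m₁ - rk μ₂ m₂)

lemma av_apply (μ₁ μ₂ : X →L[ℂ] ℂ) (m₁ m₂ x : X) :
    av μ₁ μ₂ m₁ m₂ x = (2⁻¹ : ℂ) • (x + μ₁ x • m₁ - μ₂ x • m₂) := by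
  simp [av, rk_apply, ContinuousLinearMap.smul_apply, ContinuousLinearMap.sub_apply,
    ContinuousLinearMap.add_apply, ContinuousLinearMap.one_apply]

lemma av_add_av (μ₁ μ₂ : X →L[ℂ] ℂ) (m₁ m₂ : X) :
    av μ₁ μ₂ m₁ m₂ + av μ₂ μ₁ m₂ m₁ = 1 := by
  unfold av
  rw [← smul_add]
  have : (1 + rk μ₁ m₁ - rk μ₂ m₂) + (1 + rk μ₂ m₂ - rk μ₁ m₁)
      = (2 : ℂ) • (1 : X →L[ℂ] X) := by
    rw [two_smul]
    abel
  rw [this, smul_smul]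
  norm_num

lemma fun_av (μ₁ μ₂ : X →L[ℂ] ℂ) (m₁ m₂ : X) (g : X →L[ℂ] ℂ)
    (h1 : g m₁ = 0) (h2 : g m₂ = 0) (y : X) :
    g (av μ₁ μ₂ m₁ m₂ y) = 2⁻¹ * g y := by
  rw [av_apply, map_smul, map_sub, map_add, map_smul, map_smul, h1, h2]
  simp

lemma fun_av_second (μ₁ μ₂ : X →L[ℂ] ℂ) (m₁ m₂ : X)
    (h1 : μ₂ m₁ = 0) (h2 : μ₂ m₂ = 1) (y : X) :
    μ₂ (av μ₁ μ₂ m₁ m₂ y) = 0 := by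
  rw [av_apply, map_smul, map_sub, map_add, map_smul, map_smul, h1, h2]
  simp

lemma av_vec (μ₁ μ₂ : X →L[ℂ] ℂ) (m₁ m₂ w : X) (h1 : μ₁ w = 0) (h2 : μ₂ w = 0) :
    av μ₁ μ₂ m₁ m₂ w = (2⁻¹ : ℂ) • w := by
  rw [av_apply, h1, h2]
  simp

lemma av_vec_kill (μ₁ μ₂ : X →L[ℂ] ℂ) (m₁ m₂ : X) (h1 : μ₁ m₂ = 0) (h2 : μ₂ m₂ = 1) :
    av μ₁ μ₂ m₁ m₂ m₂ = 0 := by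
  rw [av_apply, h1, h2]
  simp

lemma mul_av_left (μ₁ μ₂ : X →L[ℂ] ℂ) (m₁ m₂ : X) (P : X →L[ℂ] X)
    (h1 : P m₁ = 0) (h2 : P m₂ = 0) :
    P * av μ₁ μ₂ m₁ m₂ = (2⁻¹ : ℂ) • P := by
  ext x
  rw [ContinuousLinearMap.mul_apply, av_apply, map_smul, map_sub, map_add, map_smul,
    map_smul, h1, h2]
  simp

lemma av_mul_right (μ₁ μ₂ : X →L[ℂ] ℂ) (m₁ m₂ : X) (Q : X →L[ℂ] X)
    (h1 : ∀ x, μ₁ (Q x) = 0) (h2 : ∀ x, μ₂ (Q x) = 0) :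
    av μ₁ μ₂ m₁ m₂ * Q = (2⁻¹ : ℂ) • Q := by
  ext x
  rw [ContinuousLinearMap.mul_apply, av_apply, h1, h2]
  simp

lemma sum_snoc {r : ℕ} (c : Fin (r+1) → ℂ) (u : Fin r → X) (w : X) :
    ∑ i, c i • (Fin.snoc u w : Fin (r+1) → X) i
      = (∑ a, c a.castSucc • u a) + c (Fin.last r) • w := by
  rw [Fin.sum_univ_castSucc]
  simp [Fin.snoc_castSucc, Fin.snoc_last]

lemma snoc_biorth {r : ℕ} {u : Fin r → X} {ξ : Fin r → (X →L[ℂ] ℂ)}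
    (hbi : ∀ i j, ξ i (u j) = if i = j then 1 else 0)
    {w : X} {θ : X →L[ℂ] ℂ} (hθw : θ w = 1) (hθu : ∀ a, θ (u a) = 0)
    (hξw : ∀ a, ξ a w = 0) :
    ∀ i j, (Fin.snoc ξ θ : Fin (r+1) → (X →L[ℂ] ℂ)) i
      ((Fin.snoc u w : Fin (r+1) → X) j) = if i = j then 1 else 0 := by
  intro i j
  refine Fin.lastCases ?_ ?_ i <;> [skip; intro a] <;>
    refine Fin.lastCases ?_ ?_ j <;> try intro b
  · simp [Fin.snoc_last, hθw]
  · simp only [Fin.snoc_last, Fin.snoc_castSucc, hθu b]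
    rw [if_neg (Fin.castSucc_lt_last b).ne']
  · simp only [Fin.snoc_last, Fin.snoc_castSucc, hξw a]
    rw [if_neg (Fin.castSucc_lt_last a).ne]
  · simp only [Fin.snoc_castSucc]
    rw [hbi a b]
    by_cases hab : a = b
    · simp [hab]
    · rw [if_neg hab, if_neg (by simpa [Fin.castSucc_inj] using hab)]

lemma indep_pair {M : Type*} [AddCommGroup M] [Module ℂ M] {m₁ m₂ : M}
    (h1 : m₁ ≠ 0) (h2 : m₂ ∉ span ℂ {m₁}) :
    ∀ c₁ c₂ : ℂ, c₁ • m₁ + c₂ • m₂ = 0 → c₁ = 0 ∧ c₂ = 0 := by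
  intro c₁ c₂ hc
  have hc₂ : c₂ = 0 := by
    by_contra hne
    apply h2
    rw [Submodule.mem_span_singleton]
    refine ⟨c₂⁻¹ * -c₁, ?_⟩
    have h5 : c₂ • m₂ = -c₁ • m₁ := by
      rw [neg_smul]
      exact eq_neg_of_add_eq_zero_right hc
    calc (c₂⁻¹ * -c₁) • m₁ = c₂⁻¹ • (-c₁ • m₁) := by rw [mul_smul]
    _ = c₂⁻¹ • (c₂ • m₂) := by rw [h5]
    _ = m₂ := by rw [smul_smul, inv_mul_cancel₀ hne, one_smul]
  refine ⟨?_, hc₂⟩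
  rw [hc₂, zero_smul, add_zero] at hc
  rcases smul_eq_zero.mp hc with h | h
  · exact h
  · exact absurd h h1


lemma fun_sum_biorth {r : ℕ} (u : Fin r → X) (ξ : Fin r → (X →L[ℂ] ℂ))
    (hbi : ∀ i j, ξ i (u j) = if i = j then 1 else 0) (d : Fin r → ℂ) (b : Fin r) :
    ξ b (∑ a, d a • u a) = d b := by
  rw [map_sum]
  have hterm : ∀ a, ξ b (d a • u a) = d a * ξ b (u a) := fun a => by rw [map_smul]; rfl
  rw [Finset.sum_congr rfl fun a _ => hterm a]
  simp [hbi]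

lemma mem_M₀ (Q : X →L[ℂ] X) (x : X) :
    Q x ∈ (LinearMap.range (Q : X →ₗ[ℂ] X)).topologicalClosure :=
  Submodule.le_topologicalClosure _ (LinearMap.mem_range_self _ x)

lemma M₀_le_ker {P Q : X →L[ℂ] X} (hPQ : P * Q = 0) :
    (LinearMap.range (Q : X →ₗ[ℂ] X)).topologicalClosure ≤ LinearMap.ker (P : X →ₗ[ℂ] X) := by
  apply Submodule.topologicalClosure_minimal
  · rintro y ⟨x, rfl⟩
    have hx : P (Q x) = 0 := by
      have := ContinuousLinearMap.ext_iff.mp hPQ x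
      simpa [ContinuousLinearMap.mul_apply] using this
    simpa [LinearMap.mem_ker] using hx
  · exact ContinuousLinearMap.isClosed_ker P

lemma M₀_le_ker_fun {Q : X →L[ℂ] X} {g : X →L[ℂ] ℂ} (hg : ∀ x, g (Q x) = 0) :
    (LinearMap.range (Q : X →ₗ[ℂ] X)).topologicalClosure ≤ LinearMap.ker (g : X →ₗ[ℂ] ℂ) := by
  apply Submodule.topologicalClosure_minimal
  · rintro y ⟨x, rfl⟩
    simpa [LinearMap.mem_ker] using hg x
  · exact ContinuousLinearMap.isClosed_ker g

lemma splitQ (P Q : X →L[ℂ] X) (hPQ : P * Q = 0) {r : ℕ}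
    (u : Fin r → X) (ξ : Fin r → (X →L[ℂ] ℂ))
    (hu : ∀ i, P (u i) = 0) (hξ : ∀ i x, ξ i (Q x) = 0)
    (hbi : ∀ i j, ξ i (u j) = if i = j then 1 else 0)
    (hM : ¬ FiniteDimensional ℂ ↥((LinearMap.range (Q : X →ₗ[ℂ] X)).topologicalClosure)) :
    ∃ Q₁ Q₂ : X →L[ℂ] X, Q = Q₁ + Q₂ ∧ P * Q₁ = 0 ∧ P * Q₂ = 0 ∧
      (∃ (u' : Fin (r+1) → X) (ξ' : Fin (r+1) → (X →L[ℂ] ℂ)),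
        (∀ i, P (u' i) = 0) ∧ (∀ i x, ξ' i (Q₁ x) = 0) ∧
        (∀ i j, ξ' i (u' j) = if i = j then 1 else 0)) ∧
      (∃ (u' : Fin (r+1) → X) (ξ' : Fin (r+1) → (X →L[ℂ] ℂ)),
        (∀ i, P (u' i) = 0) ∧ (∀ i x, ξ' i (Q₂ x) = 0) ∧
        (∀ i j, ξ' i (u' j) = if i = j then 1 else 0)) := by
  classical
  set M₀ := (LinearMap.range (Q : X →ₗ[ℂ] X)).topologicalClosure with hM₀def
  set W : Submodule ℂ X := M₀ ⊓ ⨅ a, LinearMap.ker (ξ a : X →ₗ[ℂ] ℂ) with hWdef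
  have hWinf : ¬ FiniteDimensional ℂ W := inf_ker_infinite M₀ hM ξ
  obtain ⟨m₁, hm₁W, hm₁b⟩ := exists_not_mem W ⊥ hWinf inferInstance
  have hm₁ne : m₁ ≠ 0 := by simpa using hm₁b
  obtain ⟨m₂, hm₂W, hm₂s⟩ := exists_not_mem W (span ℂ {m₁}) hWinf
    (FiniteDimensional.span_of_finite ℂ (Set.finite_singleton m₁))
  have hind := indep_pair hm₁ne hm₂s
  have hm₁M : m₁ ∈ M₀ := (Submodule.mem_inf.mp hm₁W).1
  have hm₂M : m₂ ∈ M₀ := (Submodule.mem_inf.mp hm₂W).1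
  have hm₁k : ∀ a, ξ a m₁ = 0 := fun a =>
    LinearMap.mem_ker.mp ((Submodule.mem_iInf _).mp (Submodule.mem_inf.mp hm₁W).2 a)
  have hm₂k : ∀ a, ξ a m₂ = 0 := fun a =>
    LinearMap.mem_ker.mp ((Submodule.mem_iInf _).mp (Submodule.mem_inf.mp hm₂W).2 a)
  have hPm : ∀ z ∈ M₀, P z = 0 := fun z hz => LinearMap.mem_ker.mp (M₀_le_ker hPQ hz)
  haveI : FiniteDimensional ℂ (span ℂ (Set.range u)) :=
    FiniteDimensional.span_of_finite ℂ (Set.finite_range u)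
  have hZb : IsClosed ((span ℂ (Set.range u) : Submodule ℂ X) : Set X) :=
    Submodule.closed_of_finiteDimensional _
  have hv : ∀ c : Fin 2 → ℂ, (∑ i, c i • (![m₁, m₂] : Fin 2 → X) i) ∈ span ℂ (Set.range u)
      → ∀ i, c i = 0 := by
    intro c hc
    rw [Fin.sum_univ_two] at hc
    simp only [Matrix.cons_val_zero, Matrix.cons_val_one, Matrix.head_cons] at hc
    obtain ⟨d, hd⟩ := (mem_span_range_iff_exists_fun (R := ℂ)).mp hc
    have hdz : ∀ b, d b = 0 := by
      intro b
      have := congrArg (ξ b) hd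
      rw [fun_sum_biorth u ξ hbi d b, map_add, map_smul, map_smul, hm₁k b, hm₂k b] at this
      simpa using this
    have hzero : c 0 • m₁ + c 1 • m₂ = 0 := by
      rw [← hd, Finset.sum_eq_zero]
      intro a _
      rw [hdz a, zero_smul]
    obtain ⟨hc0, hc1⟩ := hind _ _ hzero
    intro i
    fin_cases i
    · exact hc0
    · exact hc1
  obtain ⟨ζ, hζb, hζZ⟩ := exists_biorth (span ℂ (Set.range u)) hZb ![m₁, m₂] hv
  set μ₁ := ζ 0 with hμ₁def
  set μ₂ := ζ 1 with hμ₂def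
  have hμ11 : μ₁ m₁ = 1 := by simpa using hζb 0 0
  have hμ12 : μ₁ m₂ = 0 := by simpa using hζb 0 1
  have hμ21 : μ₂ m₁ = 0 := by simpa using hζb 1 0
  have hμ22 : μ₂ m₂ = 1 := by simpa using hζb 1 1
  have hμu : ∀ i a, ζ i (u a) = 0 := fun i a =>
    hζZ i (u a) (Submodule.subset_span (Set.mem_range_self a))
  refine ⟨av μ₁ μ₂ m₁ m₂ * Q, av μ₂ μ₁ m₂ m₁ * Q, ?_, ?_, ?_, ?_, ?_⟩
  · rw [← add_mul, av_add_av, one_mul]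
  · rw [← mul_assoc, mul_av_left μ₁ μ₂ m₁ m₂ P (hPm m₁ hm₁M) (hPm m₂ hm₂M),
      smul_mul_assoc, hPQ, smul_zero]
  · rw [← mul_assoc, mul_av_left μ₂ μ₁ m₂ m₁ P (hPm m₂ hm₂M) (hPm m₁ hm₁M),
      smul_mul_assoc, hPQ, smul_zero]
  · refine ⟨Fin.snoc u m₂, Fin.snoc ξ μ₂, ?_, ?_,
      snoc_biorth hbi hμ22 (fun a => hμu 1 a) (fun a => hm₂k a)⟩
    · intro i
      refine Fin.lastCases ?_ ?_ i
      · rw [Fin.snoc_last]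
        exact hPm m₂ hm₂M
      · intro a
        rw [Fin.snoc_castSucc]
        exact hu a
    · intro i x
      rw [ContinuousLinearMap.mul_apply]
      refine Fin.lastCases ?_ ?_ i
      · rw [Fin.snoc_last]
        exact fun_av_second μ₁ μ₂ m₁ m₂ hμ21 hμ22 (Q x)
      · intro a
        rw [Fin.snoc_castSucc, fun_av (μ₁) (μ₂) m₁ m₂ (ξ a) (hm₁k a) (hm₂k a) (Q x),
          hξ a x, mul_zero]
  · refine ⟨Fin.snoc u m₁, Fin.snoc ξ μ₁, ?_, ?_,
      snoc_biorth hbi hμ11 (fun a => hμu 0 a) (fun a => hm₁k a)⟩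
    · intro i
      refine Fin.lastCases ?_ ?_ i
      · rw [Fin.snoc_last]
        exact hPm m₁ hm₁M
      · intro a
        rw [Fin.snoc_castSucc]
        exact hu a
    · intro i x
      rw [ContinuousLinearMap.mul_apply]
      refine Fin.lastCases ?_ ?_ i
      · rw [Fin.snoc_last]
        exact fun_av_second μ₂ μ₁ m₂ m₁ hμ12 hμ11 (Q x)
      · intro a
        rw [Fin.snoc_castSucc, fun_av (μ₂) (μ₁) m₂ m₁ (ξ a) (hm₂k a) (hm₁k a) (Q x),
          hξ a x, mul_zero]

lemma splitP (P Q : X →L[ℂ] X) (hPQ : P * Q = 0) {r : ℕ}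
    (u : Fin r → X) (ξ : Fin r → (X →L[ℂ] ℂ))
    (hu : ∀ i, P (u i) = 0) (hξ : ∀ i x, ξ i (Q x) = 0)
    (hbi : ∀ i j, ξ i (u j) = if i = j then 1 else 0)
    (hM : FiniteDimensional ℂ ↥((LinearMap.range (Q : X →ₗ[ℂ] X)).topologicalClosure))
    (hq : ¬ FiniteDimensional ℂ (X ⧸ LinearMap.ker (P : X →ₗ[ℂ] X))) :
    ∃ P₁ P₂ : X →L[ℂ] X, P = P₁ + P₂ ∧ P₁ * Q = 0 ∧ P₂ * Q = 0 ∧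
      (∃ (u' : Fin (r+1) → X) (ξ' : Fin (r+1) → (X →L[ℂ] ℂ)),
        (∀ i, P₁ (u' i) = 0) ∧ (∀ i x, ξ' i (Q x) = 0) ∧
        (∀ i j, ξ' i (u' j) = if i = j then 1 else 0)) ∧
      (∃ (u' : Fin (r+1) → X) (ξ' : Fin (r+1) → (X →L[ℂ] ℂ)),
        (∀ i, P₂ (u' i) = 0) ∧ (∀ i x, ξ' i (Q x) = 0) ∧
        (∀ i j, ξ' i (u' j) = if i = j then 1 else 0)) := by
  classical
  set M₀ := (LinearMap.range (Q : X →ₗ[ℂ] X)).topologicalClosure with hM₀def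
  obtain ⟨y₁, y₂, hy₁ξ, hy₂ξ, hind⟩ := exists_two_indep (LinearMap.ker (P : X →ₗ[ℂ] X)) hq ξ u hbi
  -- biorthogonal pair η vanishing on ker P
  have hvker : ∀ c : Fin 2 → ℂ, (∑ i, c i • (![y₁, y₂] : Fin 2 → X) i) ∈ LinearMap.ker (P : X →ₗ[ℂ] X)
      → ∀ i, c i = 0 := by
    intro c hc
    rw [Fin.sum_univ_two] at hc
    simp only [Matrix.cons_val_zero, Matrix.cons_val_one, Matrix.head_cons] at hc
    obtain ⟨h0, h1⟩ := hind _ _ hc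
    intro i
    fin_cases i
    · exact h0
    · exact h1
  obtain ⟨ζ, hζb, hζZ⟩ := exists_biorth (LinearMap.ker (P : X →ₗ[ℂ] X))
    (ContinuousLinearMap.isClosed_ker P) ![y₁, y₂] hvker
  set η₁ := ζ 0 with hη₁def
  set η₂ := ζ 1 with hη₂def
  have hη11 : η₁ y₁ = 1 := by simpa using hζb 0 0
  have hη12 : η₁ y₂ = 0 := by simpa using hζb 0 1
  have hη21 : η₂ y₁ = 0 := by simpa using hζb 1 0
  have hη22 : η₂ y₂ = 1 := by simpa using hζb 1 1
  have hQker : ∀ x, Q x ∈ LinearMap.ker (P : X →ₗ[ℂ] X) := by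
    intro x
    have hx : P (Q x) = 0 := by
      have := ContinuousLinearMap.ext_iff.mp hPQ x
      simpa [ContinuousLinearMap.mul_apply] using this
    simpa [LinearMap.mem_ker] using hx
  have hηQ : ∀ i x, ζ i (Q x) = 0 := fun i x => hζZ i (Q x) (hQker x)
  have huker : ∀ a, (u a) ∈ LinearMap.ker (P : X →ₗ[ℂ] X) := fun a => by
    simpa [LinearMap.mem_ker] using hu a
  have hηu : ∀ i a, ζ i (u a) = 0 := fun i a => hζZ i (u a) (huker a)
  have hM₀ker : M₀ ≤ LinearMap.ker (P : X →ₗ[ℂ] X) := M₀_le_ker hPQ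
  -- the new functionals, one for each piece
  have hvnew : ∀ (y : X), (∀ a, ξ a y = 0) → (∀ c : ℂ, c • y ∈ LinearMap.ker (P : X →ₗ[ℂ] X) → c = 0) →
      ∀ c : Fin (r+1) → ℂ,
      (∑ i, c i • (Fin.snoc u y : Fin (r+1) → X) i) ∈ M₀ → ∀ i, c i = 0 := by
    intro y hyξ hyind c hc
    rw [sum_snoc] at hc
    have hcz : ∀ b : Fin r, c b.castSucc = 0 := by
      intro b
      have h0 : ξ b ((∑ a, c a.castSucc • u a) + c (Fin.last r) • y) = 0 :=
        M₀_le_ker_fun (hξ b) hc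
      rw [map_add, map_smul, hyξ b, fun_sum_biorth u ξ hbi _ b] at h0
      simpa using h0
    have hsum0 : (∑ a, c a.castSucc • u a) = 0 := by
      apply Finset.sum_eq_zero
      intro a _
      rw [hcz a, zero_smul]
    rw [hsum0, zero_add] at hc
    have hlast : c (Fin.last r) = 0 := hyind _ (hM₀ker hc)
    intro i
    refine Fin.lastCases hlast (fun b : Fin r => hcz b) i
  have hind1 : ∀ c : ℂ, c • y₂ ∈ LinearMap.ker (P : X →ₗ[ℂ] X) → c = 0 := by
    intro c hc
    exact (hind 0 c (by simpa using hc)).2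
  have hind2 : ∀ c : ℂ, c • y₁ ∈ LinearMap.ker (P : X →ₗ[ℂ] X) → c = 0 := by
    intro c hc
    exact (hind c 0 (by simpa using hc)).1
  obtain ⟨θ₁, hθ₁b, hθ₁Z⟩ := exists_biorth M₀ (Submodule.isClosed_topologicalClosure _)
    (Fin.snoc u y₂) (hvnew y₂ hy₂ξ hind1)
  obtain ⟨θ₂, hθ₂b, hθ₂Z⟩ := exists_biorth M₀ (Submodule.isClosed_topologicalClosure _)
    (Fin.snoc u y₁) (hvnew y₁ hy₁ξ hind2)
  set ξn₁ := θ₁ (Fin.last r) with hξn₁def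
  set ξn₂ := θ₂ (Fin.last r) with hξn₂def
  have hξn₁y : ξn₁ y₂ = 1 := by
    have := hθ₁b (Fin.last r) (Fin.last r)
    rwa [Fin.snoc_last, if_pos rfl] at this
  have hξn₁u : ∀ a, ξn₁ (u a) = 0 := by
    intro a
    have := hθ₁b (Fin.last r) a.castSucc
    rwa [Fin.snoc_castSucc, if_neg (Fin.castSucc_lt_last a).ne'] at this
  have hξn₂y : ξn₂ y₁ = 1 := by
    have := hθ₂b (Fin.last r) (Fin.last r)
    rwa [Fin.snoc_last, if_pos rfl] at this
  have hξn₂u : ∀ a, ξn₂ (u a) = 0 := by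
    intro a
    have := hθ₂b (Fin.last r) a.castSucc
    rwa [Fin.snoc_castSucc, if_neg (Fin.castSucc_lt_last a).ne'] at this
  have hξn₁Q : ∀ x, ξn₁ (Q x) = 0 := fun x => hθ₁Z _ (Q x) (mem_M₀ Q x)
  have hξn₂Q : ∀ x, ξn₂ (Q x) = 0 := fun x => hθ₂Z _ (Q x) (mem_M₀ Q x)
  refine ⟨P * av η₁ η₂ y₁ y₂, P * av η₂ η₁ y₂ y₁, ?_, ?_, ?_, ?_, ?_⟩
  · rw [← mul_add, av_add_av, mul_one]
  · rw [mul_assoc, av_mul_right η₁ η₂ y₁ y₂ Q (hηQ 0) (hηQ 1), mul_smul_comm, hPQ, smul_zero]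
  · rw [mul_assoc, av_mul_right η₂ η₁ y₂ y₁ Q (hηQ 1) (hηQ 0), mul_smul_comm, hPQ, smul_zero]
  · refine ⟨Fin.snoc u y₂, Fin.snoc ξ ξn₁, ?_, ?_,
      snoc_biorth hbi hξn₁y hξn₁u (fun a => hy₂ξ a)⟩
    · intro i
      rw [ContinuousLinearMap.mul_apply]
      refine Fin.lastCases ?_ ?_ i
      · rw [Fin.snoc_last, av_vec_kill η₁ η₂ y₁ y₂ hη12 hη22, map_zero]
      · intro a
        rw [Fin.snoc_castSucc, av_vec η₁ η₂ y₁ y₂ (u a) (hηu 0 a) (hηu 1 a), map_smul,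
          hu a, smul_zero]
    · intro i x
      refine Fin.lastCases ?_ ?_ i
      · rw [Fin.snoc_last]
        exact hξn₁Q x
      · intro a
        rw [Fin.snoc_castSucc]
        exact hξ a x
  · refine ⟨Fin.snoc u y₁, Fin.snoc ξ ξn₂, ?_, ?_,
      snoc_biorth hbi hξn₂y hξn₂u (fun a => hy₁ξ a)⟩
    · intro i
      rw [ContinuousLinearMap.mul_apply]
      refine Fin.lastCases ?_ ?_ i
      · rw [Fin.snoc_last, av_vec_kill η₂ η₁ y₂ y₁ hη21 hη11, map_zero]
      · intro a
        rw [Fin.snoc_castSucc, av_vec η₂ η₁ y₂ y₁ (u a) (hηu 1 a) (hηu 0 a), map_smul,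
          hu a, smul_zero]
    · intro i x
      refine Fin.lastCases ?_ ?_ i
      · rw [Fin.snoc_last]
        exact hξn₂Q x
      · intro a
        rw [Fin.snoc_castSucc]
        exact hξ a x

lemma extendGood (P Q : X →L[ℂ] X) (hPQ : P * Q = 0) {r : ℕ}
    (u : Fin r → X) (ξ : Fin r → (X →L[ℂ] ℂ))
    (hu : ∀ i, P (u i) = 0) (hξ : ∀ i x, ξ i (Q x) = 0)
    (hbi : ∀ i j, ξ i (u j) = if i = j then 1 else 0)
    (hM : FiniteDimensional ℂ ↥((LinearMap.range (Q : X →ₗ[ℂ] X)).topologicalClosure))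
    (hker : ¬ FiniteDimensional ℂ ↥(LinearMap.ker (P : X →ₗ[ℂ] X))) :
    ∃ (u' : Fin (r+1) → X) (ξ' : Fin (r+1) → (X →L[ℂ] ℂ)),
      (∀ i, P (u' i) = 0) ∧ (∀ i x, ξ' i (Q x) = 0) ∧
      (∀ i j, ξ' i (u' j) = if i = j then 1 else 0) := by
  classical
  set M₀ := (LinearMap.range (Q : X →ₗ[ℂ] X)).topologicalClosure with hM₀def
  haveI : FiniteDimensional ℂ (span ℂ (Set.range u)) :=
    FiniteDimensional.span_of_finite ℂ (Set.finite_range u)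
  haveI : FiniteDimensional ℂ ↥M₀ := hM
  haveI : FiniteDimensional ℂ ↥(M₀ ⊔ span ℂ (Set.range u)) :=
    Submodule.finiteDimensional_sup _ _
  have hWinf := inf_ker_infinite (LinearMap.ker (P : X →ₗ[ℂ] X)) hker ξ
  obtain ⟨w, hwW, hwF⟩ := exists_not_mem (LinearMap.ker (P : X →ₗ[ℂ] X) ⊓ ⨅ i, LinearMap.ker (ξ i : X →ₗ[ℂ] ℂ))
    (M₀ ⊔ span ℂ (Set.range u)) hWinf inferInstance
  have hwP : P w = 0 := by
    have := (Submodule.mem_inf.mp hwW).1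
    simpa [LinearMap.mem_ker] using this
  have hwξ : ∀ a, ξ a w = 0 := fun a =>
    LinearMap.mem_ker.mp ((Submodule.mem_iInf _).mp (Submodule.mem_inf.mp hwW).2 a)
  have hwM : w ∉ M₀ := fun hmem => hwF (Submodule.mem_sup_left hmem)
  have hv : ∀ c : Fin (r+1) → ℂ,
      (∑ i, c i • (Fin.snoc u w : Fin (r+1) → X) i) ∈ M₀ → ∀ i, c i = 0 := by
    intro c hc
    rw [sum_snoc] at hc
    have hcz : ∀ b : Fin r, c b.castSucc = 0 := by
      intro b
      have h0 : ξ b ((∑ a, c a.castSucc • u a) + c (Fin.last r) • w) = 0 :=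
        M₀_le_ker_fun (hξ b) hc
      rw [map_add, map_smul, hwξ b, fun_sum_biorth u ξ hbi _ b] at h0
      simpa using h0
    have hsum0 : (∑ a, c a.castSucc • u a) = 0 := by
      apply Finset.sum_eq_zero
      intro a _
      rw [hcz a, zero_smul]
    rw [hsum0, zero_add] at hc
    have hlast : c (Fin.last r) = 0 := by
      by_contra hne
      apply hwM
      have : (c (Fin.last r))⁻¹ • (c (Fin.last r) • w) ∈ M₀ := Submodule.smul_mem _ _ hc
      rwa [smul_smul, inv_mul_cancel₀ hne, one_smul] at this
    intro i
    refine Fin.lastCases hlast (fun b : Fin r => hcz b) i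
  obtain ⟨θ, hθb, hθZ⟩ := exists_biorth M₀ (Submodule.isClosed_topologicalClosure _)
    (Fin.snoc u w) hv
  set ξn := θ (Fin.last r) with hξndef
  have hξny : ξn w = 1 := by
    have := hθb (Fin.last r) (Fin.last r)
    rwa [Fin.snoc_last, if_pos rfl] at this
  have hξnu : ∀ a, ξn (u a) = 0 := by
    intro a
    have := hθb (Fin.last r) a.castSucc
    rwa [Fin.snoc_castSucc, if_neg (Fin.castSucc_lt_last a).ne'] at this
  refine ⟨Fin.snoc u w, Fin.snoc ξ ξn, ?_, ?_,
    snoc_biorth hbi hξny hξnu (fun a => hwξ a)⟩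
  · intro i
    refine Fin.lastCases ?_ ?_ i
    · rw [Fin.snoc_last]
      exact hwP
    · intro a
      rw [Fin.snoc_castSucc]
      exact hu a
  · intro i x
    refine Fin.lastCases ?_ ?_ i
    · rw [Fin.snoc_last]
      exact hθZ _ (Q x) (mem_M₀ Q x)
    · intro a
      rw [Fin.snoc_castSucc]
      exact hξ a x

end Stmt0Aux


/-- Proposition 2.1. Let `X` be an infinite-dimensional complex Banach
space, `A` an associative complex algebra, and `φ : B(X) → A` an additive map such that
`φ P * φ Q = D` whenever `P * Q = C`, where `C` is a fixed bounded operator on `X` of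
finite rank `k` and `D ∈ A` is fixed. Then `φ` preserves the zero product. -/
theorem stmt0 {X : Type*} [NormedAddCommGroup X] [NormedSpace ℂ X] [CompleteSpace X]
    (hX : ¬FiniteDimensional ℂ X)
    {A : Type*} [Ring A] [Algebra ℂ A]
    (φ : (X →L[ℂ] X) →+ A) (C : X →L[ℂ] X) (k : ℕ) (D : A)
    (hCfin : FiniteDimensional ℂ (LinearMap.range (C : X →ₗ[ℂ] X)))
    (hCrank : Module.finrank ℂ (LinearMap.range (C : X →ₗ[ℂ] X)) = k)
    (h : ∀ P Q : X →L[ℂ] X, P * Q = C → φ P * φ Q = D) :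
    ∀ P Q : X →L[ℂ] X, P * Q = 0 → φ P * φ Q = 0 := by
  classical
  obtain ⟨e, f, hC⟩ := Stmt0Aux.C_decomp C hCfin hCrank
  have main : ∀ j : ℕ, ∀ P Q : X →L[ℂ] X, P * Q = 0 →
      (∃ (u : Fin (k - j) → X) (ξ : Fin (k - j) → (X →L[ℂ] ℂ)),
        (∀ i, P (u i) = 0) ∧ (∀ i x, ξ i (Q x) = 0) ∧
        (∀ i i', ξ i (u i') = if i = i' then 1 else 0)) →
      φ P * φ Q = 0 := by
    intro j
    induction j with
    | zero =>
      intro P Q hPQ hG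
      obtain ⟨u, ξ, hu, hξ, hbi⟩ := hG
      exact Stmt0Aux.base φ C D h e f hC P Q hPQ u ξ hu hξ hbi
    | succ j ih =>
      intro P Q hPQ hG
      by_cases hkj : k ≤ j
      · have h1 : k - j = k - (j + 1) := by omega
        exact ih P Q hPQ (by rw [h1]; exact hG)
      · have hr : k - j = (k - (j + 1)) + 1 := by omega
        obtain ⟨u, ξ, hu, hξ, hbi⟩ := hG
        by_cases hM : FiniteDimensional ℂ
            ↥((LinearMap.range (Q : X →ₗ[ℂ] X)).topologicalClosure)
        · by_cases hq : FiniteDimensional ℂ (X ⧸ LinearMap.ker (P : X →ₗ[ℂ] X))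
          · have hkerinf : ¬ FiniteDimensional ℂ ↥(LinearMap.ker (P : X →ₗ[ℂ] X)) := by
              intro hfin
              exact hX (Stmt0Aux.findim_ext (LinearMap.ker (P : X →ₗ[ℂ] X)) hfin hq)
            obtain ⟨u', ξ', hu', hξ', hbi'⟩ :=
              Stmt0Aux.extendGood P Q hPQ u ξ hu hξ hbi hM hkerinf
            exact ih P Q hPQ (by rw [hr]; exact ⟨u', ξ', hu', hξ', hbi'⟩)
          · obtain ⟨P₁, P₂, hPsum, h1, h2, g1, g2⟩ :=
              Stmt0Aux.splitP P Q hPQ u ξ hu hξ hbi hM hq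
            have e1 := ih P₁ Q h1 (by rw [hr]; exact g1)
            have e2 := ih P₂ Q h2 (by rw [hr]; exact g2)
            rw [hPsum, map_add, add_mul, e1, e2, add_zero]
        · obtain ⟨Q₁, Q₂, hQsum, h1, h2, g1, g2⟩ :=
            Stmt0Aux.splitQ P Q hPQ u ξ hu hξ hbi hM
          have e1 := ih P Q₁ h1 (by rw [hr]; exact g1)
          have e2 := ih P Q₂ h2 (by rw [hr]; exact g2)
          rw [hQsum, map_add, mul_add, e1, e2, add_zero]
  intro P Q hPQ
  apply main k P Q hPQ
  refine ⟨fun i => 0, fun i => 0, fun i => ?_, fun i x => ?_, fun i i' => ?_⟩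
  · exact absurd i.isLt (by omega)
  · exact absurd i.isLt (by omega)
  · exact absurd i.isLt (by omega)
end

section
/- Let A and B be unital associative algebras, fix c ∈ A and d ∈ B, and let φ: A → B be a linear map such that φ(a)φ(b) = d whenever ab = c. Then φ maps left annihilators of c to left annihilators of d and right annihilators of c to right annihilators of d: if x c = 0 then φ(x) d = 0, and if c x = 0 then d φ(x) = 0. -/
/-- Proposition 3.1(1). A linear map preserving products at `(c, d)`
maps left annihilators of `c` into left annihilators of `d` and right annihilators of `c`
into right annihilators of `d`. -/
theorem stmt4 {A B : Type*} [Ring A] [Algebra ℂ A] [Ring B] [Algebra ℂ B]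
    (c : A) (d : B) (φ : A →ₗ[ℂ] B)
    (h : ∀ a b : A, a * b = c → φ a * φ b = d) :
    (∀ x : A, x * c = 0 → φ x * d = 0) ∧ (∀ x : A, c * x = 0 → d * φ x = 0) := by
  have h1c : φ 1 * φ c = d := h 1 c (one_mul c)
  have hc1 : φ c * φ 1 = d := h c 1 (mul_one c)
  constructor
  · intro x hx
    have hxc : φ x * φ c = 0 := by
      have := h (1 + x) c (by rw [add_mul, one_mul, hx, add_zero])
      rw [map_add, add_mul, h1c] at this
      exact add_eq_left.mp this
    calc φ x * d = (φ x * φ c) * φ 1 := by rw [← hc1, mul_assoc]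
    _ = 0 := by rw [hxc, zero_mul]
  · intro x hx
    have hcx : φ c * φ x = 0 := by
      have := h c (1 + x) (by rw [mul_add, mul_one, hx, add_zero])
      rw [map_add, mul_add, hc1] at this
      exact add_eq_left.mp this
    calc d * φ x = φ 1 * (φ c * φ x) := by rw [← h1c, mul_assoc]
    _ = 0 := by rw [hcx, mul_zero]
end

section
/- Let A be a complex unital Banach algebra whose group of invertible elements is dense in the norm topology, and let φ: A → A be a surjective continuous linear map. Then for every nonempty open ball B_ε in A, there exists an invertible element s ∈ B_ε such that φ(s) is invertible. -/
/-- Lemma 3.2. Let `A` be a complex unital Banach algebra with dense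
invertible group and `φ : A → A` a surjective continuous linear map. Every open ball
contains an invertible element `s` with `φ s` invertible. -/
theorem stmt7 {A : Type*} [NormedRing A] [NormedAlgebra ℂ A] [CompleteSpace A]
    (hdense : Dense {a : A | IsUnit a})
    (φ : A →L[ℂ] A) (hsurj : Function.Surjective φ) :
    ∀ (x : A) (ε : ℝ), 0 < ε →
      ∃ s ∈ Metric.ball x ε, IsUnit s ∧ IsUnit (φ s) := by
  intro x ε hε
  have hopen : IsOpen (φ '' Metric.ball x ε) :=
    φ.isOpenMap hsurj _ Metric.isOpen_ball
  obtain ⟨v, hv, hvu⟩ := hdense.exists_mem_open hopen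
    ⟨φ x, ⟨x, Metric.mem_ball_self hε, rfl⟩⟩
  obtain ⟨s₀, hs₀, rfl⟩ := hvu
  have hU : IsOpen (Metric.ball x ε ∩ φ ⁻¹' {a : A | IsUnit a}) :=
    Metric.isOpen_ball.inter (Units.isOpen.preimage φ.continuous)
  obtain ⟨s, hsu, hs⟩ := hdense.exists_mem_open hU ⟨s₀, hs₀, hv⟩
  exact ⟨s, hs.1, hsu, hs.2⟩
end

section
/- Let A be a complex unital Banach algebra whose group of invertible elements is dense in the norm topology. Fix c, d ∈ A and let φ: A → A be a bijective continuous linear map such that φ(a)φ(b) = d whenever ab = c. Then c = 0 if and only if d = 0. -/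
/-- Theorem 3.3(1). Let `A` be a complex unital Banach algebra with dense
invertible group and `φ : A → A` a bijective continuous linear map preserving products at
`(c, d)`. Then `c = 0` if and only if `d = 0`. -/
theorem stmt8 {A : Type*} [NormedRing A] [NormedAlgebra ℂ A] [CompleteSpace A]
    (hdense : Dense {a : A | IsUnit a})
    (c d : A) (φ : A →L[ℂ] A) (hbij : Function.Bijective φ)
    (h : ∀ a b : A, a * b = c → φ a * φ b = d) :
    c = 0 ↔ d = 0 := by
  constructor
  · rintro rfl
    have h0 := h 0 0 (by simp)
    simpa using h0.symm
  · rintro rfl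
    -- the image of the units under φ is dense
    have himg : Dense (φ '' {a : A | IsUnit a}) := by
      intro x
      obtain ⟨y, hy⟩ := hbij.2 x
      have hx : x ∈ φ '' closure {a : A | IsUnit a} := by
        refine ⟨y, ?_, hy⟩
        simp [hdense.closure_eq]
      exact image_closure_subset_closure_image φ.continuous hx
    -- the set of units is open and nonempty
    have hopen : IsOpen {a : A | IsUnit a} := Units.isOpen
    obtain ⟨x, hx_unit, hx_mem⟩ :=
      himg.inter_open_nonempty _ hopen ⟨1, isUnit_one⟩
    obtain ⟨v, hv_unit, rfl⟩ := hx_mem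
    -- v is a unit with φ v a unit
    obtain ⟨u, rfl⟩ := hv_unit
    obtain ⟨w, hw⟩ := hx_unit
    have hfac : (u : A) * ((↑u⁻¹ : A) * c) = c := by
      rw [← mul_assoc, u.mul_inv, one_mul]
    have h1 : φ (u : A) * φ ((↑u⁻¹ : A) * c) = 0 := h _ _ hfac
    rw [← hw] at h1
    have h2 : φ ((↑u⁻¹ : A) * c) = 0 := (Units.mul_right_eq_zero w).mp h1
    have h3 : (↑u⁻¹ : A) * c = 0 := by
      apply hbij.1
      rw [h2, map_zero]
    rw [← hfac, h3, mul_zero]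
end

section
/- Let A be a complex unital Banach algebra whose group of invertible elements is dense in the norm topology. Fix c, d ∈ A and let φ: A → A be a bijective continuous linear map such that φ(a)φ(b) = d whenever ab = c. Then c is invertible if and only if d is invertible. -/
open Filter Topology Function

lemma keyG {A : Type*} [NormedRing A] [NormedAlgebra ℂ A] [CompleteSpace A]
    {c d : A} (φ : A →L[ℂ] A)
    (h : ∀ a b : A, a * b = c → φ a * φ b = d)
    (a b x : A) (hab : a * b = c) :
    φ (a * x) * φ b = φ a * φ (x * b) := by
  have hd0 : φ a * φ b = d := h a b hab
  -- continuity of t ↦ Ring.inverse (1 + t • x) at 0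
  have hinv : ContinuousAt (fun t : ℂ => Ring.inverse (1 + t • x)) 0 := by
    have h1 : ContinuousAt (fun t : ℂ => 1 + t • x) 0 := by fun_prop
    have h2 : ContinuousAt (Ring.inverse : A → A) ((fun t : ℂ => 1 + t • x) 0) := by
      simpa using NormedRing.inverse_continuousAt (1 : Aˣ)
    exact ContinuousAt.comp (g := (Ring.inverse : A → A)) (f := fun t : ℂ => 1 + t • x) (x := 0) h2 h1
  set F : ℂ → A := fun t => φ (a * x) * φ (Ring.inverse (1 + t • x) * b) with hFdef
  set H : ℂ → A := fun t => φ a * φ (Ring.inverse (1 + t • x) * (x * b)) with hHdef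
  have hFc : ContinuousAt F 0 := by
    exact continuousAt_const.mul
      (φ.continuous.continuousAt.comp (hinv.mul continuousAt_const))
  have hHc : ContinuousAt H 0 := by
    exact continuousAt_const.mul
      (φ.continuous.continuousAt.comp (hinv.mul continuousAt_const))
  have hF0 : F 0 = φ (a * x) * φ b := by simp [hFdef, Ring.inverse_one]
  have hH0 : H 0 = φ a * φ (x * b) := by simp [hHdef, Ring.inverse_one]
  have hFt : Tendsto F (𝓝[≠] (0:ℂ)) (𝓝 (φ (a * x) * φ b)) := by
    simpa [hF0] using (hFc.tendsto.mono_left nhdsWithin_le_nhds)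
  have hHt : Tendsto H (𝓝[≠] (0:ℂ)) (𝓝 (φ a * φ (x * b))) := by
    simpa [hH0] using (hHc.tendsto.mono_left nhdsWithin_le_nhds)
  have hball : ∀ᶠ t : ℂ in 𝓝 0, ‖t • x‖ < 1 := by
    have hcont : ContinuousAt (fun t : ℂ => ‖t • x‖) 0 := by fun_prop
    have : Tendsto (fun t : ℂ => ‖t • x‖) (𝓝 0) (𝓝 ‖(0:ℂ) • x‖) := hcont.tendsto
    simp only [zero_smul, norm_zero] at this
    exact this.eventually_lt_const one_pos
  have heq : F =ᶠ[𝓝[≠] (0:ℂ)] H := by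
    filter_upwards [hball.filter_mono nhdsWithin_le_nhds, self_mem_nhdsWithin] with t hlt hne
    have ht : t ≠ 0 := hne
    have hU : IsUnit (1 + t • x) := by
      refine ⟨Units.oneSub (-(t • x)) (by simpa using hlt), ?_⟩
      show (1:A) - -(t • x) = 1 + t • x
      rw [sub_neg_eq_add]
    obtain ⟨U, hUv⟩ := hU
    have hRinv : Ring.inverse (1 + t • x) = (↑U⁻¹ : A) := by
      rw [← hUv, Ring.inverse_unit]
    have hc' : (a * ↑U) * ((↑U⁻¹ : A) * b) = c := by
      rw [mul_assoc, Units.mul_inv_cancel_left, hab]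
    have h2 : φ (a * ↑U) * φ ((↑U⁻¹ : A) * b) = φ a * φ b := by
      rw [h _ _ hc', hd0]
    have e1 : φ (a * (↑U:A)) = φ a + t • φ (a * x) := by
      have : a * (↑U:A) = a + t • (a * x) := by
        rw [hUv, mul_add, mul_one, mul_smul_comm]
      rw [this, map_add, map_smul]
    have e3 : φ ((↑U⁻¹:A) * b) = φ b - t • φ ((↑U⁻¹:A) * (x * b)) := by
      have h3 : (↑U⁻¹:A) * (1 + t • x) = 1 := by rw [← hUv]; exact U.inv_mul
      have h4 : (↑U⁻¹:A) + t • ((↑U⁻¹:A) * x) = 1 := by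
        rw [← h3, mul_add, mul_one, mul_smul_comm]
      have e2 : ((↑U⁻¹:A)) = 1 - t • ((↑U⁻¹:A) * x) := eq_sub_of_add_eq h4
      have : (↑U⁻¹:A) * b = b - t • ((↑U⁻¹:A) * (x * b)) := by
        conv_lhs => rw [e2]
        rw [sub_mul, one_mul, smul_mul_assoc, mul_assoc]
      rw [this, map_sub, map_smul]
    rw [e1, add_mul, smul_mul_assoc] at h2
    have e4 : φ a * φ ((↑U⁻¹:A) * b)
        = φ a * φ b - t • (φ a * φ ((↑U⁻¹:A) * (x * b))) := by
      rw [e3, mul_sub, mul_smul_comm]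
    rw [e4] at h2
    -- h2 : φa*φb - t•(φa*Q) + t•(P) = φa*φb
    have h5 : t • (φ (a*x) * φ ((↑U⁻¹:A) * b))
        = t • (φ a * φ ((↑U⁻¹:A) * (x * b))) := by
      have h6 : φ a * φ b - t • (φ a * φ ((↑U⁻¹:A) * (x * b)))
            + t • (φ a * φ ((↑U⁻¹:A) * (x * b)))
          = φ a * φ b := sub_add_cancel _ _
      exact add_left_cancel (h2.trans h6.symm)
    have h7 : φ (a*x) * φ ((↑U⁻¹:A) * b) = φ a * φ ((↑U⁻¹:A) * (x * b)) := by
      have := congrArg (fun z => t⁻¹ • z) h5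
      simpa [smul_smul, inv_mul_cancel₀ ht] using this
    show F t = H t
    simp only [hFdef, hHdef]
    rw [hRinv]
    exact h7
  exact tendsto_nhds_unique (hFt.congr' heq) hHt

/-- Theorem 3.3(2). Let `A` be a complex unital Banach algebra with dense
invertible group and `φ : A → A` a bijective continuous linear map preserving products at
`(c, d)`. Then `c` is invertible if and only if `d` is invertible. -/
theorem stmt9 {A : Type*} [NormedRing A] [NormedAlgebra ℂ A] [CompleteSpace A]
    (hdense : Dense {a : A | IsUnit a})
    (c d : A) (φ : A →L[ℂ] A) (hbij : Function.Bijective φ)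
    (h : ∀ a b : A, a * b = c → φ a * φ b = d) :
    IsUnit c ↔ IsUnit d := by
  have key := keyG φ h
  constructor
  · -- c unit → d unit
    intro hc
    obtain ⟨C, hC⟩ := hc
    have hopen : IsOpen (φ '' {a : A | IsUnit a}) :=
      (φ.isOpenMap hbij.2) _ Units.isOpen
    obtain ⟨y, hyu, hymem⟩ :=
      hdense.exists_mem_open hopen ⟨φ 1, ⟨1, isUnit_one, rfl⟩⟩
    obtain ⟨w, hwG, rfl⟩ := hymem
    obtain ⟨W, rfl⟩ := hwG
    obtain ⟨Y, hY⟩ := hyu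
    have hWc : (↑W : A) * ((↑W⁻¹ : A) * c) = c := Units.mul_inv_cancel_left W c
    set t := φ ((↑W⁻¹ : A) * c) with htdef
    have hdWt : φ (↑W : A) * t = d := h _ _ hWc
    have keyW : ∀ x : A, φ ((↑W:A) * x) * t = φ (↑W:A) * φ (x * ((↑W⁻¹:A) * c)) :=
      fun x => key (↑W:A) ((↑W⁻¹:A) * c) x hWc
    obtain ⟨z, hz⟩ := hbij.2 (↑Y⁻¹ : A)
    set x₀ := z * (↑C⁻¹ : A) * (↑W : A) with hx0
    have hx0c : x₀ * ((↑W⁻¹:A) * c) = z := by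
      rw [hx0, ← hC]
      calc z * (↑C⁻¹:A) * ↑W * ((↑W⁻¹:A) * ↑C)
          = z * (↑C⁻¹:A) * (↑W * ((↑W⁻¹:A) * ↑C)) := by rw [mul_assoc]
        _ = z * (↑C⁻¹:A) * ↑C := by rw [Units.mul_inv_cancel_left]
        _ = z * ((↑C⁻¹:A) * ↑C) := by rw [mul_assoc]
        _ = z := by rw [Units.inv_mul, mul_one]
    have hst : φ ((↑W:A) * x₀) * t = 1 := by
      rw [keyW x₀, hx0c, hz, ← hY, Units.mul_inv]
    set s := φ ((↑W:A) * x₀) with hsdef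
    have hts : t * s = 1 := by
      obtain ⟨p, hp⟩ := hbij.2 (t * s - 1)
      set x₁ := (↑W⁻¹ : A) * p with hx1
      have hpx : φ ((↑W:A) * x₁) = t * s - 1 := by
        rw [hx1, Units.mul_inv_cancel_left, hp]
      have hq : (t * s - 1) * t = 0 := by
        rw [sub_mul, one_mul, mul_assoc, hst, mul_one, sub_self]
      have h8 : φ (↑W:A) * φ (x₁ * ((↑W⁻¹:A) * c)) = 0 := by
        rw [← keyW x₁, hpx, hq]
      have h9 : φ (x₁ * ((↑W⁻¹:A) * c)) = 0 := by
        calc φ (x₁ * ((↑W⁻¹:A) * c))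
            = (↑Y⁻¹:A) * (↑Y:A) * φ (x₁ * ((↑W⁻¹:A) * c)) := by
              rw [Units.inv_mul, one_mul]
          _ = (↑Y⁻¹:A) * (φ (↑W:A) * φ (x₁ * ((↑W⁻¹:A) * c))) := by
              rw [hY, mul_assoc]
          _ = 0 := by rw [h8, mul_zero]
      have h10 : x₁ * ((↑W⁻¹:A) * c) = 0 := by
        apply hbij.1
        rw [h9, map_zero]
      have h11 : x₁ = 0 := by
        have h10' := congrArg (fun u => u * ((↑C⁻¹:A) * ↑W)) h10
        simp only [zero_mul] at h10'
        have hunit : ((↑W⁻¹:A) * c) * ((↑C⁻¹:A) * ↑W) = 1 := by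
          rw [← hC, mul_assoc, Units.mul_inv_cancel_left, Units.inv_mul]
        calc x₁ = x₁ * (((↑W⁻¹:A) * c) * ((↑C⁻¹:A) * ↑W)) := by rw [hunit, mul_one]
          _ = x₁ * ((↑W⁻¹:A) * c) * ((↑C⁻¹:A) * ↑W) := (mul_assoc _ _ _).symm
          _ = 0 := h10'
      have h16 : t * s - 1 = 0 := by rw [← hpx, h11, mul_zero, map_zero]
      exact sub_eq_zero.mp h16
    have htu : IsUnit t := ⟨⟨t, s, hts, hst⟩, rfl⟩
    rw [← hdWt, ← hY]
    exact (Y.isUnit).mul htu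
  · -- d unit → c unit
    intro hd
    obtain ⟨D, hD⟩ := hd
    have hd1 : φ 1 * φ c = d := h 1 c (one_mul c)
    have hd2 : φ c * φ 1 = d := h c 1 (mul_one c)
    have h1r : φ 1 * (φ c * (↑D⁻¹:A)) = 1 := by
      rw [← mul_assoc, hd1, ← hD, Units.mul_inv]
    have h1l : ((↑D⁻¹:A) * φ c) * φ 1 = 1 := by
      rw [mul_assoc, hd2, ← hD, Units.inv_mul]
    have hlr : (↑D⁻¹:A) * φ c = φ c * (↑D⁻¹:A) := left_inv_eq_right_inv h1l h1r
    have h1u : IsUnit (φ 1) := ⟨⟨φ 1, φ c * (↑D⁻¹:A), h1r, by rw [← hlr]; exact h1l⟩, rfl⟩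
    obtain ⟨E, hE⟩ := h1u
    have hcu : IsUnit (φ c) := by
      have hφc : φ c = (↑E⁻¹:A) * d := by
        rw [← hd1, ← hE, ← mul_assoc, Units.inv_mul, one_mul]
      rw [hφc]
      exact (E⁻¹.isUnit).mul ⟨D, hD⟩
    obtain ⟨G, hG⟩ := hcu
    have keyL : ∀ x : A, φ x * φ c = φ 1 * φ (x * c) := by
      intro x
      have hk := key 1 c x (one_mul c)
      rwa [one_mul] at hk
    obtain ⟨x, hx⟩ := hbij.2 (↑E * ↑E * (↑G⁻¹:A))
    have hxc : x * c = 1 := by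
      apply hbij.1
      have h12 : φ 1 * φ (x * c) = φ 1 * φ 1 := by
        rw [← keyL, hx, hE, mul_assoc, mul_assoc, ← hG, Units.inv_mul, mul_one]
      calc φ (x * c) = (↑E⁻¹:A) * (φ 1 * φ (x * c)) := by
            rw [← hE, ← mul_assoc, Units.inv_mul, one_mul]
        _ = (↑E⁻¹:A) * (φ 1 * φ 1) := by rw [h12]
        _ = φ 1 := by rw [← hE, ← mul_assoc, Units.inv_mul, one_mul]
    have hcx : c * x = 1 := by
      have h13 : (c * x - 1) * c = 0 := by
        rw [sub_mul, one_mul, mul_assoc, hxc, mul_one, sub_self]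
      have h14 : φ 1 * φ ((c * x - 1) * c) = 0 := by
        rw [h13, map_zero, mul_zero]
      have h14' : φ (c * x - 1) * (↑G:A) = 0 := by
        rw [hG, keyL, h14]
      have h15 : φ (c * x - 1) = 0 := by
        calc φ (c * x - 1) = φ (c * x - 1) * ((↑G:A) * (↑G⁻¹:A)) := by
              rw [Units.mul_inv, mul_one]
          _ = (φ (c * x - 1) * (↑G:A)) * (↑G⁻¹:A) := by rw [mul_assoc]
          _ = 0 := by rw [h14', zero_mul]
      have h17 : c * x - 1 = 0 := by
        apply hbij.1
        rw [h15, map_zero]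
      exact sub_eq_zero.mp h17
    exact ⟨⟨c, x, hcx, hxc⟩, rfl⟩
end

section
/- Let A and B be complex unital Banach algebras, fix c ∈ A and an invertible d ∈ B, and let φ: A → B be a bijective linear map such that φ(a)φ(b) = d whenever ab = c. Then φ maps invertible elements to invertible elements; moreover, for every invertible t ∈ A one has φ(t⁻¹ c) = φ(t)⁻¹ d and φ(c t⁻¹) = d φ(t)⁻¹. -/
/-- Let `A`, `B` be complex unital Banach algebras, `c ∈ A`, `d ∈ B`
invertible, and `φ : A → B` a bijective linear map preserving products at `(c, d)`. Then
`φ` preserves invertibility, and for every invertible `t`, `φ (t⁻¹ c) = φ(t)⁻¹ d` and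
`φ (c t⁻¹) = d φ(t)⁻¹`. -/
theorem stmt11 {A B : Type*} [NormedRing A] [NormedAlgebra ℂ A] [CompleteSpace A]
    [NormedRing B] [NormedAlgebra ℂ B] [CompleteSpace B]
    (c : A) (d : B) (hd : IsUnit d)
    (φ : A →ₗ[ℂ] B) (hbij : Function.Bijective φ)
    (h : ∀ a b : A, a * b = c → φ a * φ b = d) :
    (∀ t : A, IsUnit t → IsUnit (φ t)) ∧
      ∀ t : Aˣ, φ (↑t⁻¹ * c) = Ring.inverse (φ ↑t) * d ∧
        φ (c * ↑t⁻¹) = d * Ring.inverse (φ ↑t) := by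
  obtain ⟨u, hu⟩ := hd
  have key : ∀ t : Aˣ, IsUnit (φ (t : A)) := by
    intro t
    have h1 : φ ↑t * φ (↑t⁻¹ * c) = d :=
      h _ _ (by rw [← mul_assoc, Units.mul_inv, one_mul])
    have h2 : φ (c * ↑t⁻¹) * φ ↑t = d :=
      h _ _ (by rw [mul_assoc, Units.inv_mul, mul_one])
    have hr : φ ↑t * (φ (↑t⁻¹ * c) * ↑u⁻¹) = 1 := by
      rw [← mul_assoc, h1, ← hu, Units.mul_inv]
    have hl : (↑u⁻¹ * φ (c * ↑t⁻¹)) * φ ↑t = 1 := by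
      rw [mul_assoc, h2, ← hu, Units.inv_mul]
    have heq : φ (↑t⁻¹ * c) * ↑u⁻¹ = ↑u⁻¹ * φ (c * ↑t⁻¹) := by
      calc φ (↑t⁻¹ * c) * ↑u⁻¹
          = ((↑u⁻¹ * φ (c * ↑t⁻¹)) * φ ↑t) * (φ (↑t⁻¹ * c) * ↑u⁻¹) := by
            rw [hl, one_mul]
        _ = (↑u⁻¹ * φ (c * ↑t⁻¹)) * (φ ↑t * (φ (↑t⁻¹ * c) * ↑u⁻¹)) := by
            rw [mul_assoc]
        _ = ↑u⁻¹ * φ (c * ↑t⁻¹) := by rw [hr, mul_one]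
    exact ⟨⟨φ ↑t, φ (↑t⁻¹ * c) * ↑u⁻¹, hr, by rw [heq]; exact hl⟩, rfl⟩
  refine ⟨fun t ht => ?_, fun t => ?_⟩
  · obtain ⟨v, rfl⟩ := ht; exact key v
  · have h1 : φ ↑t * φ (↑t⁻¹ * c) = d :=
      h _ _ (by rw [← mul_assoc, Units.mul_inv, one_mul])
    have h2 : φ (c * ↑t⁻¹) * φ ↑t = d :=
      h _ _ (by rw [mul_assoc, Units.inv_mul, mul_one])
    constructor
    · rw [← h1, ← mul_assoc, Ring.inverse_mul_cancel _ (key t), one_mul]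
    · rw [← h2, mul_assoc, Ring.mul_inverse_cancel _ (key t), mul_one]
end

section
/- Let A and B be complex unital Banach algebras, fix c ∈ A and an invertible d ∈ B, and let φ: A → B be a bijective linear map such that φ(a)φ(b) = d whenever ab = c. Set z = φ(1). Then z is invertible and φ(x⁻¹) = z φ(x)⁻¹ z for every invertible element x ∈ A. -/
section Aux

private lemma stmt12_isUnit_of_left_right {M : Type*} [Monoid M] {a l r d : M}
    (hd : IsUnit d) (hl : l * a = d) (hr : a * r = d) : IsUnit a := by
  obtain ⟨du, rfl⟩ := hd
  have h1 : (↑du⁻¹ * l) * a = 1 := by rw [mul_assoc, hl, Units.inv_mul]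
  have h2 : a * (r * ↑du⁻¹) = 1 := by rw [← mul_assoc, hr, Units.mul_inv]
  have heq : ↑du⁻¹ * l = r * ↑du⁻¹ := by
    calc (↑du⁻¹ * l : M) = (↑du⁻¹ * l) * (a * (r * ↑du⁻¹)) := by rw [h2, mul_one]
      _ = ((↑du⁻¹ * l) * a) * (r * ↑du⁻¹) := by simp only [mul_assoc]
      _ = r * ↑du⁻¹ := by rw [h1, one_mul]
  exact ⟨⟨a, r * ↑du⁻¹, h2, heq ▸ h1⟩, rfl⟩

end Aux

/-- Theorem 4.1(1). Let `A`, `B` be complex unital Banach algebras,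
`c ∈ A`, `d ∈ B` invertible, and `φ : A → B` a bijective linear map preserving products
at `(c, d)`. With `z = φ 1`, the element `z` is invertible and `φ (x⁻¹) = z * φ(x)⁻¹ * z`
for every invertible `x ∈ A`. -/
theorem stmt12 {A B : Type*} [NormedRing A] [NormedAlgebra ℂ A] [CompleteSpace A]
    [NormedRing B] [NormedAlgebra ℂ B] [CompleteSpace B]
    (c : A) (d : B) (hd : IsUnit d)
    (φ : A →ₗ[ℂ] B) (hbij : Function.Bijective φ)
    (h : ∀ a b : A, a * b = c → φ a * φ b = d) :
    IsUnit (φ 1) ∧ ∀ x : Aˣ, φ ↑x⁻¹ = φ 1 * Ring.inverse (φ ↑x) * φ 1 := by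
  obtain ⟨du, rfl⟩ := hd
  have h1c : φ 1 * φ c = ↑du := h 1 c (one_mul c)
  have hc1 : φ c * φ 1 = ↑du := h c 1 (mul_one c)
  have hz : IsUnit (φ 1) := stmt12_isUnit_of_left_right du.isUnit hc1 h1c
  refine ⟨hz, fun x => ?_⟩
  obtain ⟨zu, hzu⟩ := hz
  -- the scalar `t`
  set t : ℂ := ((‖(x : A)‖ + 1 : ℝ) : ℂ) with htdef
  have htR : (0 : ℝ) < ‖(x : A)‖ + 1 := by positivity
  have ht0 : t ≠ 0 := by
    simp only [htdef, ne_eq, Complex.ofReal_eq_zero]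
    exact ne_of_gt htR
  have hnormt : ‖t‖ = ‖(x : A)‖ + 1 := by
    rw [htdef, Complex.norm_real]
    exact abs_of_pos htR
  have hnorm : ‖(-(t⁻¹)) • (x : A)‖ < 1 := by
    rw [norm_smul, norm_neg, norm_inv, hnormt]
    have hinv : (‖(x : A)‖ + 1)⁻¹ * (‖(x : A)‖ + 1) = 1 := inv_mul_cancel₀ (ne_of_gt htR)
    nlinarith [inv_pos.mpr htR, norm_nonneg (x : A)]
  -- the unit `u = x + t • 1`
  set v : Aˣ := Units.oneSub _ hnorm with hv
  have hvval : (v : A) = 1 + t⁻¹ • (x : A) := by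
    show (1 : A) - (-(t⁻¹)) • (x : A) = 1 + t⁻¹ • (x : A)
    rw [neg_smul, sub_neg_eq_add]
  have hueq : (algebraMap ℂ A t) * (v : A) = (x : A) + t • 1 := by
    rw [← Algebra.smul_def, hvval, smul_add, smul_smul, mul_inv_cancel₀ ht0, one_smul,
      add_comm]
  have hu : IsUnit ((x : A) + t • 1) := by
    rw [← hueq]
    exact ((isUnit_iff_ne_zero.mpr ht0).map (algebraMap ℂ A)).mul v.isUnit
  obtain ⟨uu, huu⟩ := hu
  -- the seven factorizations of `c`
  have F1 : φ ↑uu * φ (↑uu⁻¹ * c) = ↑du := h _ _ (Units.mul_inv_cancel_left uu c)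
  have F2 : φ (c * ↑uu⁻¹) * φ ↑uu = ↑du := h _ _ (Units.inv_mul_cancel_right c uu)
  have F6 : φ ↑x * φ (↑x⁻¹ * c) = ↑du := h _ _ (Units.mul_inv_cancel_left x c)
  have F7 : φ (c * ↑x⁻¹) * φ ↑x = ↑du := h _ _ (Units.inv_mul_cancel_right c x)
  have F5 : φ (↑x⁻¹ * ↑uu) * φ (↑uu⁻¹ * (↑x * c)) = ↑du := by
    refine h _ _ ?_
    calc (↑x⁻¹ * ↑uu : A) * (↑uu⁻¹ * (↑x * c))
        = ↑x⁻¹ * (↑uu * (↑uu⁻¹ * (↑x * c))) := by rw [mul_assoc]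
      _ = ↑x⁻¹ * (↑x * c) := by rw [Units.mul_inv_cancel_left]
      _ = c := Units.inv_mul_cancel_left x c
  obtain ⟨Xu, hXu⟩ : IsUnit (φ ↑x) := stmt12_isUnit_of_left_right du.isUnit F7 F6
  obtain ⟨Pu, hPu⟩ : IsUnit (φ ↑uu) := stmt12_isUnit_of_left_right du.isUnit F2 F1
  -- abbreviations
  set w : B := φ ↑x⁻¹ with hw
  set R : B := φ (↑uu⁻¹ * c) with hR
  set Q : B := φ (↑uu⁻¹ * (↑x * c)) with hQdef
  set C : B := φ c with hC
  -- Q = C - t • R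
  have hQ : Q = C - t • R := by
    have hxc : (↑x : A) * c = ↑uu * c - t • c := by
      rw [huu, add_mul, smul_mul_assoc, one_mul, add_sub_cancel_right]
    have : (↑uu⁻¹ : A) * (↑x * c) = c - t • (↑uu⁻¹ * c) := by
      rw [hxc, mul_sub, Units.inv_mul_cancel_left, mul_smul_comm]
    rw [hQdef, this, map_sub, map_smul, hC, hR]
  -- φ (x⁻¹ * u) = φ 1 + t • w
  have hG : φ (↑x⁻¹ * ↑uu) = φ 1 + t • w := by
    have : (↑x⁻¹ : A) * ↑uu = 1 + t • ↑x⁻¹ := by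
      rw [huu, mul_add, Units.inv_mul, mul_smul_comm, mul_one]
    rw [this, map_add, map_smul, hw]
  -- ↑Pu = φ x + t • φ 1
  have hPval : (Pu : B) = φ ↑x + t • φ 1 := by
    rw [hPu, huu, map_add, map_smul]
  have E5 : (φ 1 + t • w) * Q = ↑du := by rw [← hG]; exact F5
  have E1 : (Pu : B) * R = ↑du := by rw [hPu]; exact F1
  -- key cancellation : w * Q = φ 1 * R
  have key1 : w * Q = φ 1 * R := by
    have expand : φ 1 * Q + t • (w * Q) = φ 1 * C := by
      have hsplit : (φ 1 + t • w) * Q = φ 1 * Q + t • (w * Q) := by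
        rw [add_mul, smul_mul_assoc]
      rw [← hsplit, E5, ← h1c, hC]
    have expand2 : φ 1 * Q = φ 1 * C - t • (φ 1 * R) := by
      rw [hQ, mul_sub, mul_smul_comm]
    rw [expand2] at expand
    have hsm : t • (w * Q) = t • (φ 1 * R) := by
      calc t • (w * Q)
          = (φ 1 * C - t • (φ 1 * R) + t • (w * Q)) - (φ 1 * C - t • (φ 1 * R)) := by abel
        _ = φ 1 * C - (φ 1 * C - t • (φ 1 * R)) := by rw [expand]
        _ = t • (φ 1 * R) := by abel
    exact smul_right_injective B ht0 hsm
  -- w * C = (φ 1 + t • w) * R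
  have key2 : w * C = (φ 1 + t • w) * R := by
    have : w * Q = w * C - t • (w * R) := by rw [hQ, mul_sub, mul_smul_comm]
    rw [this] at key1
    rw [add_mul, smul_mul_assoc]
    calc w * C = (w * C - t • (w * R)) + t • (w * R) := by abel
      _ = φ 1 * R + t • (w * R) := by rw [key1]
  -- express R and ↑zu⁻¹
  have hRval : R = ↑Pu⁻¹ * ↑du := by rw [← E1, Units.inv_mul_cancel_left]
  have hzinv : (↑zu⁻¹ : B) = C * ↑du⁻¹ := by
    have : (↑zu : B) * C = ↑du := by rw [hzu, hC]; exact h1c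
    calc (↑zu⁻¹ : B) = ↑zu⁻¹ * ((↑zu * C) * ↑du⁻¹) := by
          rw [this, Units.mul_inv, mul_one]
      _ = C * ↑du⁻¹ := by rw [← mul_assoc, ← mul_assoc, Units.inv_mul, one_mul]
  -- main identity : w * ↑zu⁻¹ * φ x = φ 1
  have main : w * ↑zu⁻¹ * φ ↑x = φ 1 := by
    have lhs1 : w * ↑zu⁻¹ * ↑Pu = (φ 1 + t • w) := by
      calc w * ↑zu⁻¹ * ↑Pu = w * (C * ↑du⁻¹) * ↑Pu := by rw [hzinv]
        _ = (w * C) * (↑du⁻¹ * ↑Pu) := by rw [mul_assoc, mul_assoc, mul_assoc]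
        _ = ((φ 1 + t • w) * R) * (↑du⁻¹ * ↑Pu) := by rw [key2]
        _ = (φ 1 + t • w) * (↑Pu⁻¹ * (↑du * (↑du⁻¹ * ↑Pu))) := by
            rw [hRval]; rw [mul_assoc, mul_assoc]
        _ = φ 1 + t • w := by rw [Units.mul_inv_cancel_left, Units.inv_mul, mul_one]
    have lhs2 : w * ↑zu⁻¹ * ↑Pu = w * ↑zu⁻¹ * φ ↑x + t • w := by
      have : w * ↑zu⁻¹ * (t • φ 1) = t • w := by
        rw [mul_smul_comm, mul_assoc, ← hzu, Units.inv_mul, mul_one]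
      rw [hPval, mul_add, this]
    rw [lhs2] at lhs1
    have := lhs1
    calc w * ↑zu⁻¹ * φ ↑x
        = (w * ↑zu⁻¹ * φ ↑x + t • w) - t • w := by abel
      _ = (φ 1 + t • w) - t • w := by rw [this]
      _ = φ 1 := by abel
  -- conclude
  have hinv : Ring.inverse (φ ↑x) = (↑Xu⁻¹ : B) := by rw [← hXu, Ring.inverse_unit]
  rw [hinv]
  calc φ ↑x⁻¹ = w := hw
    _ = w * ↑zu⁻¹ * φ ↑x * ↑Xu⁻¹ * ↑zu := by
        rw [← hXu, mul_assoc (w * ↑zu⁻¹), Units.mul_inv, mul_one, mul_assoc,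
          Units.inv_mul, mul_one]
    _ = φ 1 * ↑Xu⁻¹ * ↑zu := by rw [main]
    _ = φ 1 * ↑Xu⁻¹ * φ 1 := by rw [hzu]
end

section
/- Let A and B be complex unital Banach algebras, fix c ∈ A and an invertible d ∈ B, and let φ: A → B be a bijective linear map such that φ(a)φ(b) = d whenever ab = c. Set z = φ(1) and define ψ(x) = z⁻¹ φ(x). Then ψ is a unital bijective linear map that strongly preserves invertibility: ψ(1) = 1, and ψ(x⁻¹) = ψ(x)⁻¹ for every invertible x ∈ A. -/
lemma hua_aux {R : Type*} [Ring R] (a b s : Rˣ) (hs : (s : R) = ↑a + ↑b) :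
    ((((a * b⁻¹ * s)⁻¹ : Rˣ)) : R) = (↑a⁻¹ : R) - ↑s⁻¹ := by
  apply Units.inv_eq_of_mul_eq_one_right
  have h1 : (↑(a * b⁻¹ * s) : R) * ((↑a⁻¹ : R) - ↑s⁻¹)
      = ↑a * ↑b⁻¹ * (↑s * ↑a⁻¹) - ↑a * ↑b⁻¹ * (↑s * ↑s⁻¹) := by
    push_cast
    noncomm_ring
  rw [h1, Units.mul_inv, mul_one, hs, add_mul, mul_add, Units.mul_inv, mul_one]
  have h2 : (↑a : R) * ↑b⁻¹ * (↑b * ↑a⁻¹) = 1 := by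
    rw [← mul_assoc, mul_assoc (↑a : R), Units.inv_mul, mul_one, Units.mul_inv]
  rw [h2]
  abel

/-- Theorem 4.1(2). With hypotheses as before and `z = φ 1`, the map
`ψ x = z⁻¹ * φ x` is a unital bijective (linear) map which strongly preserves
invertibility: `ψ 1 = 1` and `ψ (x⁻¹) = (ψ x)⁻¹` for all invertible `x`. -/
theorem stmt13 {A B : Type*} [NormedRing A] [NormedAlgebra ℂ A] [CompleteSpace A]
    [NormedRing B] [NormedAlgebra ℂ B] [CompleteSpace B]
    (c : A) (d : B) (hd : IsUnit d)
    (φ : A →ₗ[ℂ] B) (hbij : Function.Bijective φ)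
    (h : ∀ a b : A, a * b = c → φ a * φ b = d) :
    IsUnit (φ 1) ∧
      Function.Bijective (fun x : A => Ring.inverse (φ 1) * φ x) ∧
      Ring.inverse (φ 1) * φ 1 = 1 ∧
      ∀ x : Aˣ, Ring.inverse (φ 1) * φ ↑x⁻¹ = Ring.inverse (Ring.inverse (φ 1) * φ ↑x) := by
  classical
  obtain ⟨D, hD⟩ := hd
  -- every unit maps to a unit
  have hRd : ∀ u : Aˣ, φ ↑u * φ (↑u⁻¹ * c) = d := fun u =>
    h _ _ (by rw [← mul_assoc, Units.mul_inv, one_mul])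
  have hLd : ∀ u : Aˣ, φ (c * ↑u⁻¹) * φ ↑u = d := fun u =>
    h _ _ (by rw [mul_assoc, Units.inv_mul, mul_one])
  have hu : ∀ u : Aˣ, IsUnit (φ ↑u) := by
    intro u
    have hr : φ ↑u * (φ (↑u⁻¹ * c) * ↑D⁻¹) = 1 := by
      rw [← mul_assoc, hRd u, ← hD, Units.mul_inv]
    have hl : (↑D⁻¹ * φ (c * ↑u⁻¹)) * φ ↑u = 1 := by
      rw [mul_assoc, hLd u, ← hD, Units.inv_mul]
    have hlr : (↑D⁻¹ * φ (c * ↑u⁻¹)) = (φ (↑u⁻¹ * c) * ↑D⁻¹) := by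
      calc (↑D⁻¹ * φ (c * ↑u⁻¹)) = (↑D⁻¹ * φ (c * ↑u⁻¹)) * (φ ↑u * (φ (↑u⁻¹ * c) * ↑D⁻¹)) := by
            rw [hr, mul_one]
        _ = ((↑D⁻¹ * φ (c * ↑u⁻¹)) * φ ↑u) * (φ (↑u⁻¹ * c) * ↑D⁻¹) := by
            simp only [mul_assoc]
        _ = (φ (↑u⁻¹ * c) * ↑D⁻¹) := by rw [hl, one_mul]
    exact ⟨⟨φ ↑u, φ (↑u⁻¹ * c) * ↑D⁻¹, hr, by rw [← hlr, hl]⟩, rfl⟩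
  -- (R):
  have hR : ∀ u : Aˣ, φ (↑u⁻¹ * c) = Ring.inverse (φ ↑u) * d := by
    intro u
    calc φ (↑u⁻¹ * c) = Ring.inverse (φ ↑u) * (φ ↑u * φ (↑u⁻¹ * c)) := by
          rw [← mul_assoc, Ring.inverse_mul_cancel _ (hu u), one_mul]
      _ = Ring.inverse (φ ↑u) * d := by rw [hRd u]
  -- Key Hua transport (H):
  have hH : ∀ a b s : Aˣ, (↑s : A) = ↑a + ↑b →
      φ (↑a * ↑b⁻¹ * ↑a) = φ ↑a * Ring.inverse (φ ↑b) * φ ↑a := by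
    intro a b s hs
    set T : Aˣ := a * b⁻¹ * s with hT
    have hTinv : ((T⁻¹ : Aˣ) : A) = ↑a⁻¹ - ↑s⁻¹ := hua_aux a b s hs
    have e1 : φ (↑T⁻¹ * c) = φ (↑a⁻¹ * c) - φ (↑s⁻¹ * c) := by
      rw [hTinv, sub_mul, map_sub]
    have e2 : Ring.inverse (φ ↑T) * d = Ring.inverse (φ ↑a) * d - Ring.inverse (φ ↑s) * d := by
      rw [← hR T, ← hR a, ← hR s]; exact e1
    have e3 : Ring.inverse (φ ↑T) = Ring.inverse (φ ↑a) - Ring.inverse (φ ↑s) :=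
      IsUnit.mul_right_cancel ⟨D, hD⟩ (by rw [sub_mul]; exact e2)
    obtain ⟨FA, hFA⟩ := hu a
    obtain ⟨FB, hFB⟩ := hu b
    obtain ⟨FS, hFS⟩ := hu s
    have hFSsum : (↑FS : B) = ↑FA + ↑FB := by
      rw [hFS, hFA, hFB, show ((s : A)) = ↑a + ↑b from hs, map_add]
    set T' : Bˣ := FA * FB⁻¹ * FS with hT'
    have hT'inv : ((T'⁻¹ : Bˣ) : B) = ↑FA⁻¹ - ↑FS⁻¹ := hua_aux FA FB FS hFSsum
    have e4 : Ring.inverse (φ ↑T) = ↑T'⁻¹ := by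
      rw [e3, hT'inv, ← hFA, ← hFS, Ring.inverse_unit, Ring.inverse_unit]
    have e5 : φ ↑T = ↑T' := by
      calc φ ↑T = φ ↑T * (↑T'⁻¹ * ↑T') := by rw [Units.inv_mul, mul_one]
        _ = (φ ↑T * Ring.inverse (φ ↑T)) * ↑T' := by rw [e4, mul_assoc]
        _ = ↑T' := by rw [Ring.mul_inverse_cancel _ (hu T), one_mul]
    have hTval : (↑T : A) = ↑a * ↑b⁻¹ * ↑a + ↑a := by
      push_cast [hT]
      rw [hs, mul_add]
      have hb : (↑a : A) * ↑b⁻¹ * ↑b = ↑a := by rw [mul_assoc, Units.inv_mul, mul_one]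
      rw [hb]
    have hT'val : (↑T' : B) = ↑FA * ↑FB⁻¹ * ↑FA + ↑FA := by
      push_cast [hT']
      rw [hFSsum, mul_add]
      have hb : (↑FA : B) * ↑FB⁻¹ * ↑FB = ↑FA := by rw [mul_assoc, Units.inv_mul, mul_one]
      rw [hb]
    have e6 : φ (↑a * ↑b⁻¹ * ↑a) + φ ↑a = φ ↑a * ↑FB⁻¹ * φ ↑a + φ ↑a := by
      rw [← map_add, ← hTval, e5, hT'val, hFA]
    have e7 := add_right_cancel e6
    rw [e7, ← hFB, Ring.inverse_unit]
  -- basic facts about z = φ 1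
  have hone : ((1 : Aˣ) : A) = (1 : A) := Units.val_one
  have hz : IsUnit (φ 1) := by
    have := hu 1
    rwa [hone] at this
  obtain ⟨Z, hZ⟩ := hz
  refine ⟨⟨Z, hZ⟩, ?_, Ring.inverse_mul_cancel _ ⟨Z, hZ⟩, ?_⟩
  · constructor
    · intro x y hxy
      apply hbij.1
      have h2 := congrArg (fun w => φ 1 * w) hxy
      simpa only [← mul_assoc, Ring.mul_inverse_cancel _ (⟨Z, hZ⟩ : IsUnit (φ 1)), one_mul]
        using h2
    · intro y
      obtain ⟨x, hx⟩ := hbij.2 (φ 1 * y)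
      refine ⟨x, ?_⟩
      show Ring.inverse (φ 1) * φ x = y
      rw [hx, ← mul_assoc, Ring.inverse_mul_cancel _ (⟨Z, hZ⟩ : IsUnit (φ 1)), one_mul]
  · intro x
    -- pick a small scalar t
    set r : ℝ := ‖(↑x : A)‖ with hr
    set t : ℂ := (((2 * (r + 1))⁻¹ : ℝ) : ℂ) with htdef
    have hrpos : (0 : ℝ) < 2 * (r + 1) := by positivity
    have ht : t ≠ 0 := by
      simp only [htdef, ne_eq, Complex.ofReal_eq_zero, inv_eq_zero]
      exact ne_of_gt hrpos
    have hnorm : ‖t • (↑x : A)‖ < 1 := by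
      rw [norm_smul, htdef, Complex.norm_real, Real.norm_eq_abs,
        abs_of_pos (by positivity)]
      rw [inv_mul_lt_iff₀ hrpos, mul_one]
      have : (0:ℝ) ≤ r := norm_nonneg _
      linarith
    have hxb1 : (t • (↑x : A)) * (t⁻¹ • (↑x⁻¹ : A)) = 1 := by
      rw [smul_mul_smul_comm, mul_inv_cancel₀ ht, Units.mul_inv, one_smul]
    have hxb2 : (t⁻¹ • (↑x⁻¹ : A)) * (t • (↑x : A)) = 1 := by
      rw [smul_mul_smul_comm, inv_mul_cancel₀ ht, Units.inv_mul, one_smul]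
    set xb : Aˣ := ⟨t • ↑x, t⁻¹ • ↑x⁻¹, hxb1, hxb2⟩ with hxbdef
    set s : Aˣ := Units.oneSub (-(t • (↑x : A))) (by rwa [norm_neg]) with hsdef
    have hs : (↑s : A) = ↑(1 : Aˣ) + ↑xb := by
      show (1 : A) - (-(t • (↑x : A))) = 1 + t • ↑x
      rw [sub_neg_eq_add]
    have hHx := hH 1 xb s hs
    obtain ⟨X, hX⟩ := hu x
    -- Ring.inverse of t • φ x
    have hXinv : Ring.inverse (φ ((xb : A))) = t⁻¹ • ↑X⁻¹ := by
      have hval : φ ((xb : A)) = ((⟨t • ↑X, t⁻¹ • ↑X⁻¹,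
          by rw [smul_mul_smul_comm, mul_inv_cancel₀ ht, Units.mul_inv, one_smul],
          by rw [smul_mul_smul_comm, inv_mul_cancel₀ ht, Units.inv_mul, one_smul]⟩ : Bˣ) : B) := by
        show φ (t • (↑x : A)) = t • (↑X : B)
        rw [map_smul, hX]
      rw [hval, Ring.inverse_unit]
      rfl
    have hxbinv : ((xb⁻¹ : Aˣ) : A) = t⁻¹ • (↑x⁻¹ : A) := rfl
    rw [hxbinv, hone, one_mul, mul_one, hXinv, map_smul] at hHx
    have e : φ (↑x⁻¹ : A) = φ 1 * ↑X⁻¹ * φ 1 := by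
      have h2 : t⁻¹ • φ ((↑x⁻¹ : A)) = t⁻¹ • (φ 1 * ↑X⁻¹ * φ 1) := by
        rw [hHx, mul_smul_comm, smul_mul_assoc]
      exact smul_right_injective _ (inv_ne_zero ht) h2
    rw [e, ← hZ, ← hX]
    have hZX : (↑Z⁻¹ : B) * ↑X = (↑(Z⁻¹ * X) : B) := (Units.val_mul _ _).symm
    rw [Ring.inverse_unit, hZX, Ring.inverse_unit, mul_inv_rev, inv_inv]
    push_cast
    rw [← mul_assoc, ← mul_assoc, Units.inv_mul, one_mul]
end

section
/- Let A and B be complex unital Banach algebras, fix c ∈ A and an invertible d ∈ B, and let φ: A → B be a bijective linear map such that φ(a)φ(b) = d whenever ab = c. Set z = φ(1). Then the map ψ(x) = z⁻¹ φ(x) is a unital Jordan homomorphism: ψ(x²) = ψ(x)² for all x ∈ A, and ψ(1) = 1. -/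
private theorem isUnit_of_left_right {M : Type*} [Monoid M] {a b c : M}
    (h1 : a * b = 1) (h2 : c * a = 1) : IsUnit a := by
  have hbc : b = c := by
    calc b = 1 * b := (one_mul b).symm
      _ = c * a * b := by rw [h2]
      _ = c * (a * b) := mul_assoc ..
      _ = c := by rw [h1, mul_one]
  exact ⟨⟨a, b, h1, by rw [hbc]; exact h2⟩, rfl⟩

/-- Theorem 4.1(3). With hypotheses as before and `z = φ 1`, the map
`ψ x = z⁻¹ * φ x` is a unital Jordan homomorphism: `ψ (x²) = (ψ x)²` for all `x`, and
`ψ 1 = 1`. -/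
theorem stmt14 {A B : Type*} [NormedRing A] [NormedAlgebra ℂ A] [CompleteSpace A]
    [NormedRing B] [NormedAlgebra ℂ B] [CompleteSpace B]
    (c : A) (d : B) (hd : IsUnit d)
    (φ : A →ₗ[ℂ] B) (hbij : Function.Bijective φ)
    (h : ∀ a b : A, a * b = c → φ a * φ b = d) :
    IsUnit (φ 1) ∧ Ring.inverse (φ 1) * φ 1 = 1 ∧
      ∀ x : A, Ring.inverse (φ 1) * φ (x * x)
        = (Ring.inverse (φ 1) * φ x) * (Ring.inverse (φ 1) * φ x) := by
  set z := φ 1 with hzdef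
  have hz : IsUnit z := by
    have h1 : z * φ c = d := h 1 c (one_mul c)
    have h2 : φ c * z = d := h c 1 (mul_one c)
    refine isUnit_of_left_right (b := φ c * Ring.inverse d) (c := Ring.inverse d * φ c) ?_ ?_
    · rw [← mul_assoc, h1, Ring.mul_inverse_cancel d hd]
    · rw [mul_assoc, h2, Ring.inverse_mul_cancel d hd]
  have hz1 : z * Ring.inverse z = 1 := Ring.mul_inverse_cancel z hz
  have hz2 : Ring.inverse z * z = 1 := Ring.inverse_mul_cancel z hz
  -- φ maps units to units
  have hφu : ∀ u : Aˣ, IsUnit (φ u) := by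
    intro u
    have h1 : φ ↑u * φ (↑u⁻¹ * c) = d := h _ _ (by rw [← mul_assoc, Units.mul_inv, one_mul])
    have h2 : φ (c * ↑u⁻¹) * φ ↑u = d := h _ _ (by rw [mul_assoc, Units.inv_mul, mul_one])
    refine isUnit_of_left_right (b := φ (↑u⁻¹ * c) * Ring.inverse d)
      (c := Ring.inverse d * φ (c * ↑u⁻¹)) ?_ ?_
    · rw [← mul_assoc, h1, Ring.mul_inverse_cancel d hd]
    · rw [mul_assoc, h2, Ring.inverse_mul_cancel d hd]
  have hinv : ∀ u : Aˣ, φ (↑u⁻¹ * c) = Ring.inverse (φ ↑u) * d := by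
    intro u
    have h1 : φ ↑u * φ (↑u⁻¹ * c) = d := h _ _ (by rw [← mul_assoc, Units.mul_inv, one_mul])
    calc φ ((↑u⁻¹ : A) * c) = (Ring.inverse (φ ↑u) * φ ↑u) * φ ((↑u⁻¹ : A) * c) := by
          rw [Ring.inverse_mul_cancel _ (hφu u), one_mul]
      _ = Ring.inverse (φ ↑u) * d := by rw [mul_assoc, h1]
  -- Main step: for a unit u such that 1 + u is a unit, φ (u*u) = φ u * z⁻¹ * φ u.
  have main : ∀ U V : Aˣ, (↑V : A) = 1 + ↑U →
      φ (↑U * ↑U) = φ ↑U * Ring.inverse z * φ ↑U := by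
    intro U V hV
    -- Hua-type identity in A
    have hA : (↑U⁻¹ : A) - ↑(U*V)⁻¹ = ↑V⁻¹ := by
      rw [mul_inv_rev, Units.val_mul]
      have h1 : (1 : A) - ↑V⁻¹ = ↑V⁻¹ * ↑U := by
        calc (1:A) - ↑V⁻¹ = ↑V⁻¹ * ↑V - ↑V⁻¹ * 1 := by rw [Units.inv_mul, mul_one]
          _ = ↑V⁻¹ * (↑V - 1) := by rw [mul_sub]
          _ = ↑V⁻¹ * ↑U := by rw [hV, add_sub_cancel_left]
      calc (↑U⁻¹ : A) - ↑V⁻¹ * ↑U⁻¹ = (1 - ↑V⁻¹) * ↑U⁻¹ := by rw [sub_mul, one_mul]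
        _ = ↑V⁻¹ * (↑U * ↑U⁻¹) := by rw [h1, mul_assoc]
        _ = ↑V⁻¹ := by rw [Units.mul_inv, mul_one]
    have e1 : φ ((↑U⁻¹ : A) * c) - φ ((↑(U*V)⁻¹ : A) * c) = φ ((↑V⁻¹ : A) * c) := by
      rw [← map_sub, ← sub_mul, hA]
    rw [hinv U, hinv (U*V), hinv V] at e1
    have e2 : Ring.inverse (φ ↑U) - Ring.inverse (φ ↑(U*V)) = Ring.inverse (φ ↑V) := by
      have h3 := congrArg (· * Ring.inverse d) e1
      simpa [sub_mul, mul_assoc, Ring.mul_inverse_cancel d hd] using h3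
    have hUV : (↑(U*V) : A) = ↑U + ↑U * ↑U := by rw [Units.val_mul, hV, mul_add, mul_one]
    have hPQ : φ ↑(U*V) = φ ↑U + φ (↑U*↑U) := by rw [hUV, map_add]
    have hZP : φ ↑V = z + φ ↑U := by rw [hV, map_add, ← hzdef]
    set P := φ ↑U with hP
    set Q := φ (↑U * ↑U) with hQ
    have hPu : IsUnit P := hφu U
    have hWu : IsUnit (P + Q) := by rw [← hPQ]; exact hφu (U*V)
    have hSu : IsUnit (z + P) := by rw [← hZP]; exact hφu V
    rw [hPQ, hZP] at e2
    have step1 : Ring.inverse P * Q = Ring.inverse (z+P) * (P+Q) := by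
      calc Ring.inverse P * Q
          = (Ring.inverse P - Ring.inverse (P+Q)) * (P+Q) := by
            rw [sub_mul, mul_add, Ring.inverse_mul_cancel _ hPu,
              Ring.inverse_mul_cancel _ hWu]
            abel
        _ = Ring.inverse (z+P) * (P+Q) := by rw [e2]
    have step2 : (z+P) * (Ring.inverse P * Q) = P + Q := by
      rw [step1, ← mul_assoc, Ring.mul_inverse_cancel _ hSu, one_mul]
    have step3 : z * (Ring.inverse P * Q) = P := by
      have h4 : z * (Ring.inverse P * Q) + P * (Ring.inverse P * Q) = P + Q := by
        rw [← add_mul]; exact step2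
      rw [← mul_assoc P (Ring.inverse P) Q, Ring.mul_inverse_cancel _ hPu, one_mul] at h4
      exact add_right_cancel h4
    have h5 : Ring.inverse P * Q = Ring.inverse z * P := by
      calc Ring.inverse P * Q
          = Ring.inverse z * (z * (Ring.inverse P * Q)) := by
            rw [← mul_assoc, hz2, one_mul]
        _ = Ring.inverse z * P := by rw [step3]
    calc Q = P * (Ring.inverse P * Q) := by
          rw [← mul_assoc, Ring.mul_inverse_cancel _ hPu, one_mul]
      _ = P * (Ring.inverse z * P) := by rw [h5]
      _ = P * Ring.inverse z * P := (mul_assoc ..).symm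
  -- units of the form r•1 + x for large real r
  have hscalar : ∀ (r : ℝ) (x : A), ‖x‖ < r → IsUnit ((r:ℂ) • (1:A) + x) := by
    intro r x hxr
    have hr : (0:ℝ) < r := lt_of_le_of_lt (norm_nonneg x) hxr
    have hrne : ((r:ℂ)) ≠ 0 := by exact_mod_cast ne_of_gt hr
    set t : A := -((r:ℂ)⁻¹ • x) with ht
    have htn : ‖t‖ < 1 := by
      rw [ht, norm_neg, norm_smul, norm_inv, Complex.norm_real, Real.norm_of_nonneg hr.le]
      calc r⁻¹ * ‖x‖ < r⁻¹ * r := by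
            exact mul_lt_mul_of_pos_left hxr (inv_pos.mpr hr)
        _ = 1 := inv_mul_cancel₀ (ne_of_gt hr)
    have hu1 : IsUnit ((1:A) - t) := (Units.oneSub t htn).isUnit
    have heq : (r:ℂ) • ((1:A) - t) = (r:ℂ) • (1:A) + x := by
      rw [ht, sub_neg_eq_add, smul_add, smul_smul, mul_inv_cancel₀ hrne, one_smul]
    rw [← heq, Algebra.smul_def]
    exact ((isUnit_iff_ne_zero.mpr hrne).map (algebraMap ℂ A)).mul hu1
  refine ⟨hz, hz2, ?_⟩
  intro x
  set r : ℝ := ‖x‖ + 2 with hr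
  set μ : ℂ := (r : ℂ) with hμ
  set u : A := μ • (1:A) + x with hu
  have hU : IsUnit u := hscalar r x (by simp [hr])
  have hVu : IsUnit (1 + u) := by
    have h1 : (1:A) + u = ((r+1 : ℝ):ℂ) • (1:A) + x := by
      rw [hu]; push_cast; rw [add_smul, one_smul]; abel
    rw [h1]
    exact hscalar (r+1) x (by simp [hr]; linarith)
  have hVspec : (↑hVu.unit : A) = 1 + ↑hU.unit := by
    rw [IsUnit.unit_spec, IsUnit.unit_spec]
  have heq : φ (u * u) = φ u * Ring.inverse z * φ u := by
    have := main hU.unit hVu.unit hVspec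
    rwa [IsUnit.unit_spec] at this
  have expand1 : u * u = (μ*μ) • (1:A) + μ • x + (μ • x + x * x) := by
    rw [hu, add_mul, mul_add, mul_add, smul_mul_assoc, smul_mul_assoc, one_mul, one_mul,
      mul_smul_comm, mul_one, smul_smul]
  have hL : φ (u * u) = (μ*μ) • z + μ • φ x + (μ • φ x + φ (x * x)) := by
    rw [expand1]
    simp only [map_add, map_smul]
    rw [← hzdef]
  have hφux : φ u = μ • z + φ x := by rw [hu, map_add, map_smul, ← hzdef]
  have hR : φ u * Ring.inverse z * φ u
      = (μ*μ) • z + μ • φ x + (μ • φ x + φ x * Ring.inverse z * φ x) := by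
    rw [hφux]
    calc (μ • z + φ x) * Ring.inverse z * (μ • z + φ x)
        = (μ • (z * Ring.inverse z) + φ x * Ring.inverse z) * (μ • z + φ x) := by
          rw [add_mul, smul_mul_assoc]
      _ = (μ • (1:B) + φ x * Ring.inverse z) * (μ • z + φ x) := by rw [hz1]
      _ = μ • (μ • z) + μ • φ x + (μ • (φ x * (Ring.inverse z * z)) + φ x * Ring.inverse z * φ x) := by
          rw [add_mul, mul_add, mul_add, smul_mul_assoc, smul_mul_assoc, one_mul, one_mul,
            mul_smul_comm, mul_assoc]
      _ = (μ*μ) • z + μ • φ x + (μ • φ x + φ x * Ring.inverse z * φ x) := by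
          rw [hz2, mul_one, smul_smul]
  have key : φ (x * x) = φ x * Ring.inverse z * φ x := by
    have h6 := hL.symm.trans (heq.trans hR)
    exact add_left_cancel (add_left_cancel h6)
  rw [key]
  simp only [mul_assoc]
end

section
/- Let A and B be complex unital Banach algebras with B prime, fix c ∈ A and an invertible d ∈ B, and let φ: A → B be a bijective linear map such that φ(a)φ(b) = d whenever ab = c. Set z = φ(1) and ψ(x) = z⁻¹ φ(x). Then ψ is either an algebra homomorphism (ψ(xy) = ψ(x)ψ(y) for all x, y ∈ A) or an algebra antihomomorphism (ψ(xy) = ψ(y)ψ(x) for all x, y ∈ A). -/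
set_option linter.unusedSectionVars false
set_option maxHeartbeats 1000000

section stmt15aux
variable {A : Type*} {B : Type*} [Ring A] [Ring B] [Module ℂ B]

private lemma stmt15_half_cancel {m n : B} (h : m + m = n + n) : m = n := by
  have h2 : (2:ℂ) • m = (2:ℂ) • n := by rw [two_smul, two_smul]; exact h
  calc m = ((2:ℂ)⁻¹ * 2) • m := by norm_num
    _ = (2:ℂ)⁻¹ • ((2:ℂ) • m) := by rw [mul_smul]
    _ = (2:ℂ)⁻¹ • ((2:ℂ) • n) := by rw [h2]
    _ = ((2:ℂ)⁻¹ * 2) • n := by rw [mul_smul]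
    _ = n := by norm_num

private lemma stmt15_zero_of_self_add_self {m : B} (h : m + m = 0) : m = 0 :=
  stmt15_half_cancel (n := 0) (by rw [h, add_zero])

private lemma stmt15_smul_cancel {t : ℂ} (ht : t ≠ 0) {m n : B} (h : t • m = t • n) :
    m = n := by
  calc m = (t⁻¹ * t) • m := by rw [inv_mul_cancel₀ ht, one_smul]
    _ = t⁻¹ • (t • m) := by rw [mul_smul]
    _ = t⁻¹ • (t • n) := by rw [h]
    _ = (t⁻¹ * t) • n := by rw [mul_smul]
    _ = n := by rw [inv_mul_cancel₀ ht, one_smul]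

private lemma stmt15_two_sided {a r l : B} (har : a * r = 1) (hla : l * a = 1) :
    r * a = 1 := by
  have hlr : l = r := by rw [← mul_one l, ← har, ← mul_assoc, hla, one_mul]
  rw [← hlr]; exact hla

private lemma stmt15_two_sided' {a r l : B} (har : a * r = 1) (hla : l * a = 1) :
    a * l = 1 := by
  have hlr : l = r := by rw [← mul_one l, ← har, ← mul_assoc, hla, one_mul]
  rw [hlr]; exact har

private lemma stmt15_jordan_two (f : A → B) (hadd : ∀ a b, f (a + b) = f a + f b)
    (hJ : ∀ a, f (a * a) = f a * f a) (x y : A) :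
    f (x * y + y * x) = f x * f y + f y * f x := by
  have e1 : (x + y) * (x + y) = (x * x + y * y) + (x * y + y * x) := by noncomm_ring
  have e2 := hJ (x + y)
  rw [e1, hadd (x * x + y * y), hadd (x * x), hJ x, hJ y, hadd x y] at e2
  calc f (x * y + y * x)
      = (f x * f x + f y * f y) + f (x * y + y * x) - (f x * f x + f y * f y) := by abel
    _ = (f x + f y) * (f x + f y) - (f x * f x + f y * f y) := by rw [e2]
    _ = f x * f y + f y * f x := by noncomm_ring

private lemma stmt15_jordan_triple (f : A → B) (hadd : ∀ a b, f (a + b) = f a + f b)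
    (hJ : ∀ a, f (a * a) = f a * f a) (a v : A) :
    f (a * v * a) = f a * f v * f a := by
  have e1 : a * (a * v + v * a) + (a * v + v * a) * a
      = (a * v * a + a * v * a) + ((a * a) * v + v * (a * a)) := by noncomm_ring
  have e2 := stmt15_jordan_two f hadd hJ a (a * v + v * a)
  rw [e1, hadd (a * v * a + a * v * a), hadd (a * v * a),
    stmt15_jordan_two f hadd hJ (a * a) v, stmt15_jordan_two f hadd hJ a v, hJ a] at e2
  have e3 : f (a * v * a) + f (a * v * a)
      = f a * f v * f a + f a * f v * f a := by
    calc f (a * v * a) + f (a * v * a)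
        = (f (a * v * a) + f (a * v * a) + (f a * f a * f v + f v * (f a * f a)))
          - (f a * f a * f v + f v * (f a * f a)) := by abel
      _ = (f a * (f a * f v + f v * f a) + (f a * f v + f v * f a) * f a)
          - (f a * f a * f v + f v * (f a * f a)) := by rw [e2]
      _ = f a * f v * f a + f a * f v * f a := by noncomm_ring
  exact stmt15_half_cancel e3

private lemma stmt15_jordan_triple_lin (f : A → B) (hadd : ∀ a b, f (a + b) = f a + f b)
    (hJ : ∀ a, f (a * a) = f a * f a) (a b v : A) :
    f (a * v * b + b * v * a) = f a * f v * f b + f b * f v * f a := by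
  have e1 : (a + b) * v * (a + b) = (a * v * a + b * v * b) + (a * v * b + b * v * a) := by
    noncomm_ring
  have e2 := stmt15_jordan_triple f hadd hJ (a + b) v
  rw [e1, hadd (a * v * a + b * v * b), hadd (a * v * a), stmt15_jordan_triple f hadd hJ a v,
    stmt15_jordan_triple f hadd hJ b v, hadd a b] at e2
  calc f (a * v * b + b * v * a)
      = (f a * f v * f a + f b * f v * f b) + f (a * v * b + b * v * a)
        - (f a * f v * f a + f b * f v * f b) := by abel
    _ = (f a + f b) * f v * (f a + f b) - (f a * f v * f a + f b * f v * f b) := by rw [e2]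
    _ = f a * f v * f b + f b * f v * f a := by noncomm_ring

private lemma stmt15_anti (f : A → B) (hadd : ∀ a b, f (a + b) = f a + f b)
    (hJ : ∀ a, f (a * a) = f a * f a) (x y t : A) :
    (f (x * y) - f x * f y) * f t * (f (x * y) - f y * f x)
      + (f (x * y) - f y * f x) * f t * (f (x * y) - f x * f y) = 0 := by
  set P := f (x * y) with hP
  set X := f x
  set Y := f y
  set T := f t
  have w2 : f ((x * y) * t * (y * x)) = X * (Y * T * Y) * X := by
    have harg : (x * y) * t * (y * x) = x * (y * t * y) * x := by noncomm_ring
    rw [harg, stmt15_jordan_triple f hadd hJ x (y * t * y), stmt15_jordan_triple f hadd hJ y t]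
  have w3 : f ((y * x) * t * (x * y)) = Y * (X * T * X) * Y := by
    have harg : (y * x) * t * (x * y) = y * (x * t * x) * y := by noncomm_ring
    rw [harg, stmt15_jordan_triple f hadd hJ y (x * t * x), stmt15_jordan_triple f hadd hJ x t]
  have k3 := stmt15_jordan_triple_lin f hadd hJ (x * y) (y * x) t
  rw [hadd ((x * y) * t * (y * x)), w2, w3] at k3
  have k1 := stmt15_jordan_two f hadd hJ x y
  rw [hadd (x * y)] at k1
  have hQ : f (y * x) = X * Y + Y * X - P := by
    calc f (y * x) = (f (x * y) + f (y * x)) - P := by rw [← hP]; abel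
      _ = X * Y + Y * X - P := by rw [k1]
  rw [hQ] at k3
  calc (P - X * Y) * T * (P - Y * X) + (P - Y * X) * T * (P - X * Y)
      = (X * (Y * T * Y) * X + Y * (X * T * X) * Y)
        - (P * T * (X * Y + Y * X - P) + (X * Y + Y * X - P) * T * P) := by noncomm_ring
    _ = 0 := by rw [← k3]; noncomm_ring

private lemma stmt15_perpair (hprime : ∀ a b : B, (∀ r : B, a * r * b = 0) → a = 0 ∨ b = 0)
    {E D : B} (h0 : ∀ X : B, E * X * D + D * X * E = 0) : E = 0 ∨ D = 0 := by
  by_cases hE : E = 0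
  · exact Or.inl hE
  right
  have key : ∀ x y : B, (D * x * D) * y * E = 0 := by
    intro x y
    have hid : ((D * x * D) * y * E) + ((D * x * D) * y * E)
        = D * x * (D * y * E + E * y * D) - (D * x * E + E * x * D) * (y * D)
          + (E * (x * D * y) * D + D * (x * D * y) * E) := by noncomm_ring
    have h1 : D * y * E + E * y * D = 0 := by
      have := h0 y; linear_combination (norm := noncomm_ring) this
    have h2 : D * x * E + E * x * D = 0 := by
      have := h0 x; linear_combination (norm := noncomm_ring) this
    have h3 : E * (x * D * y) * D + D * (x * D * y) * E = 0 := h0 (x * D * y)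
    rw [h1, h2, h3] at hid
    simp only [mul_zero, zero_mul, sub_zero, add_zero, zero_sub, zero_add] at hid
    exact stmt15_zero_of_self_add_self hid
  have hDD : ∀ x : B, D * x * D = 0 := by
    intro x
    rcases hprime (D * x * D) E (key x) with h' | h'
    · exact h'
    · exact absurd h' hE
  rcases hprime D D hDD with h' | h' <;> exact h'

private lemma stmt15_dichotomy {E D : A → A → B}
    (hEx : ∀ x x' y, E (x + x') y = E x y + E x' y)
    (hEy : ∀ x y y', E x (y + y') = E x y + E x y')
    (hDx : ∀ x x' y, D (x + x') y = D x y + D x' y)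
    (hDy : ∀ x y y', D x (y + y') = D x y + D x y')
    (hpt : ∀ x y, E x y = 0 ∨ D x y = 0) :
    (∀ x y, E x y = 0) ∨ (∀ x y, D x y = 0) := by
  by_contra hcon
  push_neg at hcon
  obtain ⟨⟨x1, y1, hE1⟩, ⟨x2, y2, hD2⟩⟩ := hcon
  have hD1 : D x1 y1 = 0 := (hpt x1 y1).resolve_left hE1
  have hE2 : E x2 y2 = 0 := by
    rcases hpt x2 y2 with h | h
    · exact h
    · exact absurd h hD2
  have α1 : ∀ x, D x y1 = 0 := by
    intro x
    rcases hpt x y1 with h | h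
    · rcases hpt (x1 + x) y1 with h' | h'
      · rw [hEx, h, add_zero] at h'; exact absurd h' hE1
      · rw [hDx, hD1, zero_add] at h'; exact h'
    · exact h
  have α2 : ∀ x, E x y2 = 0 := by
    intro x
    rcases hpt x y2 with h | h
    · exact h
    · rcases hpt (x2 + x) y2 with h' | h'
      · rw [hEx, hE2, zero_add] at h'; exact h'
      · rw [hDx, h, add_zero] at h'; exact absurd h' hD2
  have β1 : ∀ y, D x1 y = 0 := by
    intro y
    rcases hpt x1 y with h | h
    · rcases hpt x1 (y1 + y) with h' | h'
      · rw [hEy, h, add_zero] at h'; exact absurd h' hE1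
      · rw [hDy, hD1, zero_add] at h'; exact h'
    · exact h
  have β2 : ∀ y, E x2 y = 0 := by
    intro y
    rcases hpt x2 y with h | h
    · exact h
    · rcases hpt x2 (y2 + y) with h' | h'
      · rw [hEy, hE2, zero_add] at h'; exact h'
      · rw [hDy, h, add_zero] at h'; exact absurd h' hD2
  rcases hpt (x1 + x2) (y1 + y2) with h | h
  · rw [hEx, hEy, hEy, β2 y1, β2 y2, α2 x1, add_zero, add_zero, add_zero] at h
    exact hE1 h
  · rw [hDx, hDy, hDy, β1 y2, α1 x2, hD1, add_zero, zero_add, zero_add] at h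
    exact hD2 h

private lemma stmt15_herstein (hprime : ∀ a b : B, (∀ r : B, a * r * b = 0) → a = 0 ∨ b = 0)
    (f : A → B) (hadd : ∀ a b, f (a + b) = f a + f b)
    (hJ : ∀ a, f (a * a) = f a * f a) (hsurj : Function.Surjective f) :
    (∀ x y, f (x * y) = f x * f y) ∨ (∀ x y, f (x * y) = f y * f x) := by
  set E : A → A → B := fun x y => f (x * y) - f x * f y with hE
  set D : A → A → B := fun x y => f (x * y) - f y * f x with hD
  have hEx : ∀ x x' y, E (x + x') y = E x y + E x' y := by
    intro x x' y
    simp only [hE, add_mul, hadd]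
    noncomm_ring
  have hEy : ∀ x y y', E x (y + y') = E x y + E x y' := by
    intro x y y'
    simp only [hE, mul_add, hadd]
    noncomm_ring
  have hDx : ∀ x x' y, D (x + x') y = D x y + D x' y := by
    intro x x' y
    simp only [hD, add_mul, hadd]
    noncomm_ring
  have hDy : ∀ x y y', D x (y + y') = D x y + D x y' := by
    intro x y y'
    simp only [hD, mul_add, hadd]
    noncomm_ring
  have hpt : ∀ x y, E x y = 0 ∨ D x y = 0 := by
    intro x y
    apply stmt15_perpair hprime
    intro X
    obtain ⟨t, ht⟩ := hsurj X
    rw [← ht]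
    exact stmt15_anti f hadd hJ x y t
  rcases stmt15_dichotomy hEx hEy hDx hDy hpt with hc | hc
  · left; intro x y; have := hc x y; simp only [hE] at this; exact sub_eq_zero.mp this
  · right; intro x y; have := hc x y; simp only [hD] at this; exact sub_eq_zero.mp this

end stmt15aux

/-- Theorem 4.1(4). With hypotheses as before, `B` prime, and
`ψ x = φ(1)⁻¹ * φ x`, the map `ψ` is either an algebra homomorphism or an algebra
antihomomorphism. -/
theorem stmt15 {A B : Type*} [NormedRing A] [NormedAlgebra ℂ A] [CompleteSpace A]
    [NormedRing B] [NormedAlgebra ℂ B] [CompleteSpace B]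
    (hprime : ∀ a b : B, (∀ r : B, a * r * b = 0) → a = 0 ∨ b = 0)
    (c : A) (d : B) (hd : IsUnit d)
    (φ : A →ₗ[ℂ] B) (hbij : Function.Bijective φ)
    (h : ∀ a b : A, a * b = c → φ a * φ b = d) :
    (∀ x y : A, Ring.inverse (φ 1) * φ (x * y)
        = (Ring.inverse (φ 1) * φ x) * (Ring.inverse (φ 1) * φ y)) ∨
      (∀ x y : A, Ring.inverse (φ 1) * φ (x * y)
        = (Ring.inverse (φ 1) * φ y) * (Ring.inverse (φ 1) * φ x)) := by
  classical
  obtain ⟨du, hdu⟩ := hd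
  set z : B := φ 1 with hz
  set w : B := φ c with hw
  have hzw : z * w = d := h 1 c (one_mul c)
  have hwz : w * z = d := h c 1 (mul_one c)
  set d' : B := ↑du⁻¹ with hd'
  have hdd' : d * d' = 1 := by rw [hd', ← hdu]; exact du.mul_inv
  have hd'd : d' * d = 1 := by rw [hd', ← hdu]; exact du.inv_mul
  set z' : B := w * d' with hz'
  have hzz' : z * z' = 1 := by rw [hz', ← mul_assoc, hzw, hdd']
  have hz'z : z' * z = 1 :=
    stmt15_two_sided hzz' (l := d' * w) (by rw [mul_assoc, hwz, hd'd])
  set w' : B := d' * z with hw'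
  have hw'w : w' * w = 1 := by rw [hw', mul_assoc, hzw, hd'd]
  have hww' : w * w' = 1 :=
    stmt15_two_sided' (r := z * d') (by rw [← mul_assoc, hwz, hdd']) hw'w
  set wu : Bˣ := ⟨w, w', hww', hw'w⟩ with hwu_def
  -- φ maps units to units
  have hUnit : ∀ v : Aˣ, IsUnit (φ ↑v) := by
    intro v
    have h1 : φ ↑v * φ (↑v⁻¹ * c) = d := h _ _ (by rw [← mul_assoc, Units.mul_inv, one_mul])
    have h2 : φ (c * ↑v⁻¹) * φ ↑v = d := h _ _ (by rw [mul_assoc, Units.inv_mul, mul_one])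
    have har : φ ↑v * (φ (↑v⁻¹ * c) * d') = 1 := by rw [← mul_assoc, h1, hdd']
    have hla : (d' * φ (c * ↑v⁻¹)) * φ ↑v = 1 := by rw [mul_assoc, h2, hd'd]
    exact ⟨⟨φ ↑v, φ (↑v⁻¹ * c) * d', har, stmt15_two_sided har hla⟩, rfl⟩
  -- for each unit u of A, φ (↑u * c) is a unit with explicit inverse
  have hGmk : ∀ u : Aˣ, ∃ Gu : Bˣ,
      (↑Gu : B) = φ (↑u * c) ∧ (↑Gu⁻¹ : B) = d' * φ ↑u⁻¹ := by
    intro u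
    set Fu : Bˣ := (hUnit u⁻¹).unit with hFu_def
    have hFu : (↑Fu : B) = φ ↑u⁻¹ := (hUnit u⁻¹).unit_spec
    have hrel : φ ↑u⁻¹ * φ (↑u * c) = d := h _ _ (by rw [← mul_assoc, Units.inv_mul, one_mul])
    refine ⟨Fu⁻¹ * du, ?_, ?_⟩
    · rw [Units.val_mul, hdu]
      calc (↑Fu⁻¹ : B) * d = ↑Fu⁻¹ * (φ ↑u⁻¹ * φ (↑u * c)) := by rw [hrel]
        _ = (↑Fu⁻¹ * ↑Fu) * φ (↑u * c) := by rw [← hFu, mul_assoc]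
        _ = φ (↑u * c) := by rw [Units.inv_mul, one_mul]
    · rw [mul_inv_rev, inv_inv, Units.val_mul, hFu, hd']

  -- The key Jordan-type identity
  have hKey : ∀ x : A, φ (x * (x * c)) = φ (x * c) * w' * φ (x * c) := by
    intro x
    set P : B := φ (x * c) with hP
    set S : B := φ (x * (x * c)) with hS
    have hnr0 : (0:ℝ) < ‖x‖ + 1 := by positivity
    set t : ℝ := (‖x‖ + 1)⁻¹/2 with ht_def
    set s : ℝ := (‖x‖ + 1)⁻¹/4 with hs_def
    have ht0 : 0 < t := by rw [ht_def]; positivity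
    have hs0 : 0 < s := by rw [hs_def]; positivity
    have htsne : t ≠ s := by
      rw [ht_def, hs_def]
      intro hts
      have : (‖x‖ + 1)⁻¹ ≠ 0 := by positivity
      field_simp at hts
      norm_num at hts
    set tc : ℂ := (t : ℂ) with htc_def
    set sc : ℂ := (s : ℂ) with hsc_def
    have htc0 : tc ≠ 0 := by
      rw [htc_def]; exact_mod_cast ne_of_gt ht0
    have hsc0 : sc ≠ 0 := by
      rw [hsc_def]; exact_mod_cast ne_of_gt hs0
    have htsc : tc - sc ≠ 0 := by
      rw [htc_def, hsc_def, sub_ne_zero]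
      exact_mod_cast htsne
    have hprodne : tc * sc ≠ 0 := mul_ne_zero htc0 hsc0
    have hnt : ‖-(tc • x)‖ < 1 := by
      rw [norm_neg, norm_smul, htc_def, Complex.norm_real, Real.norm_eq_abs]
      rw [abs_of_pos ht0, ht_def]
      rw [div_mul_eq_mul_div, div_lt_one (by norm_num : (0:ℝ) < 2)]
      have hmul : (‖x‖ + 1)⁻¹ * (‖x‖ + 1) = 1 := inv_mul_cancel₀ (ne_of_gt hnr0)
      have hip : (0:ℝ) < (‖x‖ + 1)⁻¹ := by positivity
      nlinarith [norm_nonneg x]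
    have hns : ‖-(sc • x)‖ < 1 := by
      rw [norm_neg, norm_smul, hsc_def, Complex.norm_real, Real.norm_eq_abs]
      rw [abs_of_pos hs0, hs_def]
      rw [div_mul_eq_mul_div, div_lt_one (by norm_num : (0:ℝ) < 4)]
      have hmul : (‖x‖ + 1)⁻¹ * (‖x‖ + 1) = 1 := inv_mul_cancel₀ (ne_of_gt hnr0)
      have hip : (0:ℝ) < (‖x‖ + 1)⁻¹ := by positivity
      nlinarith [norm_nonneg x]
    set ut : Aˣ := Units.oneSub (-(tc • x)) hnt with hut_def
    set us : Aˣ := Units.oneSub (-(sc • x)) hns with hus_def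
    have hut : (↑ut : A) = 1 + tc • x := by
      rw [hut_def, Units.val_oneSub, sub_neg_eq_add]
    have hus : (↑us : A) = 1 + sc • x := by
      rw [hus_def, Units.val_oneSub, sub_neg_eq_add]
    have hcomm : (↑ut : A) * ↑us = ↑us * ↑ut := by
      rw [hut, hus]
      have hxx : (tc • x) * (sc • x) = (sc • x) * (tc • x) := by
        rw [smul_mul_smul_comm, smul_mul_smul_comm, mul_comm tc sc]
      rw [mul_add (1 + tc • x) 1 (sc • x), mul_one, add_mul 1 (tc • x) (sc • x), one_mul,
        mul_add (1 + sc • x) 1 (tc • x), mul_one, add_mul 1 (sc • x) (tc • x), one_mul, hxx]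
      abel
    -- linear identity in A
    have hlinA : tc • (↑ut⁻¹ : A) - sc • ↑us⁻¹ = (tc - sc) • ↑(ut * us)⁻¹ := by
      have hmc : ∀ y y' : A, y * ↑(ut * us) = y' * ↑(ut * us) → y = y' := by
        intro y y' hy
        calc y = y * ↑(ut*us) * ↑(ut*us)⁻¹ := by rw [mul_assoc, Units.mul_inv, mul_one]
          _ = y' * ↑(ut*us) * ↑(ut*us)⁻¹ := by rw [hy]
          _ = y' := by rw [mul_assoc, Units.mul_inv, mul_one]
      apply hmc
      have e3 : (↑(ut*us)⁻¹ : A) * ↑(ut * us) = 1 := Units.inv_mul _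
      rw [sub_mul, smul_mul_assoc, smul_mul_assoc, smul_mul_assoc, e3]
      rw [Units.val_mul]
      have e1 : (↑ut⁻¹ : A) * (↑ut * ↑us) = ↑us := by
        rw [← mul_assoc, Units.inv_mul, one_mul]
      have e2 : (↑us⁻¹ : A) * (↑ut * ↑us) = ↑ut := by
        rw [hcomm, ← mul_assoc, Units.inv_mul, one_mul]
      rw [e1, e2, hut, hus, smul_add, smul_add, smul_smul, smul_smul, mul_comm sc tc,
        sub_smul]
      abel
    have hlinB : tc • φ ↑ut⁻¹ - sc • φ ↑us⁻¹ = (tc - sc) • φ ↑(ut * us)⁻¹ := by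
      have := congrArg φ hlinA
      rwa [map_sub, map_smul, map_smul, map_smul] at this
    obtain ⟨Gt, hGt, hGt'⟩ := hGmk ut
    obtain ⟨Gs, hGs, hGs'⟩ := hGmk us
    obtain ⟨GX, hGX, hGX'⟩ := hGmk (ut * us)
    have hFt : φ ↑ut⁻¹ = d * ↑Gt⁻¹ := by rw [hGt', ← mul_assoc, hdd', one_mul]
    have hFs : φ ↑us⁻¹ = d * ↑Gs⁻¹ := by rw [hGs', ← mul_assoc, hdd', one_mul]
    have hFX : φ ↑(ut * us)⁻¹ = d * ↑GX⁻¹ := by rw [hGX', ← mul_assoc, hdd', one_mul]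
    rw [hFt, hFs, hFX] at hlinB
    have hlin2 : tc • (↑Gt⁻¹ : B) - sc • ↑Gs⁻¹ = (tc - sc) • ↑GX⁻¹ := by
      have h9 := congrArg (fun m => d' * m) hlinB
      simp only [mul_sub, mul_smul_comm, ← mul_assoc, hd'd, one_mul] at h9
      exact h9
    have hlin3 : tc • (↑Gs : B) - sc • ↑Gt = (tc - sc) • ((↑Gt : B) * ↑GX⁻¹ * ↑Gs) := by
      calc tc • (↑Gs : B) - sc • ↑Gt
          = (↑Gt : B) * (tc • (↑Gt⁻¹ : B) - sc • ↑Gs⁻¹) * ↑Gs := by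
            rw [mul_sub, sub_mul, mul_smul_comm, mul_smul_comm, smul_mul_assoc,
              smul_mul_assoc, Units.mul_inv, one_mul, mul_assoc ((↑Gt : B)) ((↑Gs⁻¹ : B)),
              Units.inv_mul, mul_one]
        _ = (↑Gt : B) * ((tc - sc) • (↑GX⁻¹ : B)) * ↑Gs := by rw [hlin2]
        _ = (tc - sc) • ((↑Gt : B) * ↑GX⁻¹ * ↑Gs) := by
            rw [mul_smul_comm, smul_mul_assoc]
    -- value computations
    have hGtval : (↑Gt : B) = w + tc • P := by
      rw [hGt, hut, add_mul, one_mul, smul_mul_assoc, map_add, map_smul, ← hw, ← hP]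
    have hGsval : (↑Gs : B) = w + sc • P := by
      rw [hGs, hus, add_mul, one_mul, smul_mul_assoc, map_add, map_smul, ← hw, ← hP]
    have hGXval : (↑GX : B) = w + tc • P + sc • P + (tc * sc) • S := by
      have e : (↑(ut*us) : A) * c = c + tc • (x * c) + sc • (x * c) + (tc*sc) • (x * (x * c)) := by
        rw [Units.val_mul, mul_assoc, hut, hus]
        simp only [add_mul, mul_add, one_mul, mul_one, smul_mul_assoc, mul_smul_comm,
          smul_add, smul_smul, mul_assoc, mul_comm sc tc]
        abel
      rw [hGX, e, map_add, map_add, map_add, map_smul, map_smul, map_smul, ← hw, ← hP, ← hS]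
    -- conclude w = Gt * GX⁻¹ * Gs
    have hwGG : w = (↑Gt : B) * ↑GX⁻¹ * ↑Gs := by
      apply stmt15_smul_cancel htsc
      rw [← hlin3, hGtval, hGsval, smul_add, smul_add, smul_smul, smul_smul,
        mul_comm sc tc, sub_smul]
      abel
    have hwu : wu = Gt * GX⁻¹ * Gs := by
      apply Units.ext
      rw [Units.val_mul, Units.val_mul]
      exact hwGG
    have hGXu : GX = Gs * wu⁻¹ * Gt := by
      rw [hwu]
      group
    have hGXval2 : (↑GX : B) = (w + sc • P) * w' * (w + tc • P) := by
      rw [hGXu, Units.val_mul, Units.val_mul, ← hGsval, ← hGtval]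
      rfl
    have hexp : (w + sc • P) * w' * (w + tc • P)
        = w + tc • P + sc • P + (tc * sc) • (P * w' * P) := by
      rw [add_mul w (sc • P) w', smul_mul_assoc, hww']
      rw [add_mul (1:B) (sc • (P * w')) (w + tc • P), one_mul, smul_mul_assoc]
      rw [mul_add (P * w') w (tc • P), mul_assoc P w' w, hw'w, mul_one, mul_smul_comm]
      rw [smul_add, smul_smul, mul_comm sc tc]
      abel
    rw [hGXval, hexp] at hGXval2
    have hfin : (tc * sc) • S = (tc * sc) • (P * w' * P) := by
      calc (tc * sc) • S
          = (w + tc • P + sc • P + (tc * sc) • S) - (w + tc • P + sc • P) := by abel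
        _ = (w + tc • P + sc • P + (tc * sc) • (P * w' * P)) - (w + tc • P + sc • P) := by
            rw [← hGXval2]
        _ = (tc * sc) • (P * w' * P) := by abel
    have := stmt15_smul_cancel hprodne hfin
    rw [hP, hS] at this
    exact this

  -- Θ and Ψ
  set Θ : A → B := fun x => φ (x * c) * w' with hΘ
  set Ψ : A → B := fun x => z' * φ x with hΨ
  have hΘadd : ∀ a b, Θ (a + b) = Θ a + Θ b := by
    intro a b
    simp only [hΘ, add_mul, map_add]
  have hΨadd : ∀ a b, Ψ (a + b) = Ψ a + Ψ b := by
    intro a b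
    simp only [hΨ, map_add, mul_add]
  have hΘJ : ∀ x, Θ (x * x) = Θ x * Θ x := by
    intro x
    simp only [hΘ]
    rw [mul_assoc x x c, hKey x]
    rw [mul_assoc (φ (x * c) * w') (φ (x * c)) w']
  -- Θ agrees with Ψ on units
  have hmatch : ∀ u : Aˣ, Θ ↑u = Ψ ↑u := by
    suffices hsuff : ∀ u : Aˣ, Θ ↑u⁻¹ = Ψ ↑u⁻¹ by
      intro u
      have := hsuff u⁻¹
      rwa [inv_inv] at this
    intro u
    obtain ⟨Gu, hGu, hGu'⟩ := hGmk u
    set V : Bˣ := Gu * wu⁻¹ with hV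
    have hVval : (↑V : B) = Θ ↑u := by
      rw [hV, Units.val_mul, hGu, hΘ]
      rfl
    have htr : Θ ↑u * Θ ↑u⁻¹ * Θ ↑u = Θ ↑u := by
      have h9 := stmt15_jordan_triple Θ hΘadd hΘJ (↑u : A) (↑u⁻¹ : A)
      rw [Units.mul_inv, one_mul] at h9
      exact h9.symm
    have hcan : Θ ↑u⁻¹ = (↑V⁻¹ : B) := by
      calc Θ ↑u⁻¹ = ((↑V⁻¹ : B) * ↑V) * Θ ↑u⁻¹ * (↑V * ↑V⁻¹) := by
            rw [Units.inv_mul, Units.mul_inv, one_mul, mul_one]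
        _ = (↑V⁻¹ : B) * (↑V * Θ ↑u⁻¹ * ↑V) * ↑V⁻¹ := by
            simp only [mul_assoc]
        _ = (↑V⁻¹ : B) * (Θ ↑u * Θ ↑u⁻¹ * Θ ↑u) * ↑V⁻¹ := by rw [hVval]
        _ = (↑V⁻¹ : B) * Θ ↑u * ↑V⁻¹ := by rw [htr]
        _ = (↑V⁻¹ : B) * ↑V * ↑V⁻¹ := by rw [hVval]
        _ = (↑V⁻¹ : B) := by rw [Units.inv_mul, one_mul]
    rw [hcan, hV, mul_inv_rev, inv_inv, Units.val_mul, hGu', hΨ]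
    show (↑wu : B) * (d' * φ ↑u⁻¹) = z' * φ ↑u⁻¹
    show w * (d' * φ ↑u⁻¹) = z' * φ ↑u⁻¹
    rw [hz', ← mul_assoc]
  -- decomposition into sum of two units
  have hdecomp : ∀ x : A, ∃ u v : Aˣ, (↑u : A) + ↑v = x := by
    intro x
    have hr0 : (0:ℝ) < ‖x‖ + 1 := by positivity
    set ρ : ℂ := ((‖x‖ + 1 : ℝ) : ℂ) with hρ_def
    have hρ : ρ ≠ 0 := by
      rw [hρ_def]
      exact_mod_cast ne_of_gt hr0
    have hs1a : (ρ • (1:A)) * (ρ⁻¹ • (1:A)) = 1 := by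
      rw [smul_mul_smul_comm, mul_inv_cancel₀ hρ, one_mul, one_smul]
    have hs1b : (ρ⁻¹ • (1:A)) * (ρ • (1:A)) = 1 := by
      rw [smul_mul_smul_comm, inv_mul_cancel₀ hρ, one_mul, one_smul]
    set s1 : Aˣ := ⟨ρ • (1:A), ρ⁻¹ • (1:A), hs1a, hs1b⟩ with hs1_def
    have hnv : ‖ρ⁻¹ • x‖ < 1 := by
      rw [norm_smul, hρ_def, ← Complex.ofReal_inv, Complex.norm_real, Real.norm_eq_abs,
        abs_of_pos (by positivity)]
      have hmul : (‖x‖ + 1)⁻¹ * (‖x‖ + 1) = 1 := inv_mul_cancel₀ (ne_of_gt hr0)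
      have hip : (0:ℝ) < (‖x‖ + 1)⁻¹ := by positivity
      nlinarith [norm_nonneg x]
    set v0 : Aˣ := Units.oneSub (ρ⁻¹ • x) hnv with hv0_def
    refine ⟨s1, -(s1 * v0), ?_⟩
    have hval : (↑(s1 * v0) : A) = ρ • (1:A) - x := by
      rw [Units.val_mul, hv0_def, Units.val_oneSub]
      show (ρ • (1:A)) * (1 - ρ⁻¹ • x) = ρ • (1:A) - x
      rw [mul_sub, mul_one, smul_mul_smul_comm, mul_inv_cancel₀ hρ, one_mul, one_smul]
    rw [Units.val_neg, hval]
    show ρ • (1:A) + -(ρ • (1:A) - x) = x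
    abel
  have hΘΨ : ∀ x, Θ x = Ψ x := by
    intro x
    obtain ⟨u, v, huv⟩ := hdecomp x
    rw [← huv, hΘadd, hΨadd, hmatch u, hmatch v]
  have hΨJ : ∀ x, Ψ (x * x) = Ψ x * Ψ x := by
    intro x
    rw [← hΘΨ (x * x), ← hΘΨ x, hΘJ]
  have hΨsurj : Function.Surjective Ψ := by
    intro T
    obtain ⟨a, ha⟩ := hbij.2 (z * T)
    refine ⟨a, ?_⟩
    show z' * φ a = T
    rw [ha, ← mul_assoc, hz'z, one_mul]
  have hRinv : Ring.inverse z = z' := by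
    have hzu : z = ↑(⟨z, z', hzz', hz'z⟩ : Bˣ) := rfl
    rw [hzu, Ring.inverse_unit]
    rfl
  rcases stmt15_herstein hprime Ψ hΨadd hΨJ hΨsurj with hc | hc
  · left
    intro x y
    rw [hRinv]
    have := hc x y
    simp only [hΨ] at this
    exact this
  · right
    intro x y
    rw [hRinv]
    have := hc x y
    simp only [hΨ] at this
    exact this
end

section
/- Fix a positive integer n and invertible matrices C, D, U in M_n(ℂ) together with a nonzero scalar α ∈ ℂ satisfying α² U Cᵗ U⁻¹ = D⁻¹. Define φ: M_n(ℂ) → M_n(ℂ) by φ(T) = α D U Tᵗ U⁻¹, where Tᵗ denotes the transpose of T. Then φ is a bijective linear map satisfying φ(A)φ(B) = D whenever A B = C, and φ(I) = α D is not assumed central; moreover z⁻¹φ with z = φ(I) is an antihomomorphism composed from the transpose map. -/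
open Matrix

/-- Remark after Theorem 4.1. For invertible matrices `C, D, U` in
`Mₙ(ℂ)` and a nonzero scalar `α` with `α² U Cᵀ U⁻¹ = D⁻¹`, the map
`φ T = α • (D * U * Tᵀ * U⁻¹)` is a bijective linear map preserving products at `(C, D)`,
`φ I = α • D`, and `z⁻¹ φ` (with `z = φ I`) is an antihomomorphism. -/
theorem stmt16 (n : ℕ) (hn : 0 < n)
    (C D U : Matrix (Fin n) (Fin n) ℂ)
    (hC : IsUnit C) (hD : IsUnit D) (hU : IsUnit U)
    (α : ℂ) (hα : α ≠ 0)
    (hrel : (α ^ 2) • (U * Cᵀ * U⁻¹) = D⁻¹)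
    (φ : Matrix (Fin n) (Fin n) ℂ → Matrix (Fin n) (Fin n) ℂ)
    (hφ : ∀ T, φ T = α • (D * U * Tᵀ * U⁻¹)) :
    IsLinearMap ℂ φ ∧ Function.Bijective φ ∧
      (∀ A B : Matrix (Fin n) (Fin n) ℂ, A * B = C → φ A * φ B = D) ∧
      φ 1 = α • D ∧
      (∀ A B : Matrix (Fin n) (Fin n) ℂ,
        Ring.inverse (φ 1) * φ (A * B)
          = (Ring.inverse (φ 1) * φ B) * (Ring.inverse (φ 1) * φ A)) := by
  have hUd : IsUnit U.det := (Matrix.isUnit_iff_isUnit_det U).mp hU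
  have hDd : IsUnit D.det := (Matrix.isUnit_iff_isUnit_det D).mp hD
  have hCd : IsUnit C.det := (Matrix.isUnit_iff_isUnit_det C).mp hC
  have hUU : U * U⁻¹ = 1 := Matrix.mul_nonsing_inv U hUd
  have hUU' : U⁻¹ * U = 1 := Matrix.nonsing_inv_mul U hUd
  have hDD : D * D⁻¹ = 1 := Matrix.mul_nonsing_inv D hDd
  have hDD' : D⁻¹ * D = 1 := Matrix.nonsing_inv_mul D hDd
  have hDD2 : ∀ X : Matrix (Fin n) (Fin n) ℂ, D⁻¹ * (D * X) = X := fun X => by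
    rw [← Matrix.mul_assoc, hDD', one_mul]
  have hDD2' : ∀ X : Matrix (Fin n) (Fin n) ℂ, D * (D⁻¹ * X) = X := fun X => by
    rw [← Matrix.mul_assoc, hDD, one_mul]
  have hUU2 : ∀ X : Matrix (Fin n) (Fin n) ℂ, U⁻¹ * (U * X) = X := fun X => by
    rw [← Matrix.mul_assoc, hUU', one_mul]
  have hUU2' : ∀ X : Matrix (Fin n) (Fin n) ℂ, U * (U⁻¹ * X) = X := fun X => by
    rw [← Matrix.mul_assoc, hUU, one_mul]
  have hkey : (α ^ 2) • (D * (U * Cᵀ * U⁻¹)) = 1 := by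
    rw [← Matrix.mul_smul, hrel]; exact hDD
  have hφ1 : φ 1 = α • D := by
    rw [hφ, Matrix.transpose_one, mul_one, Matrix.mul_assoc, hUU, mul_one]
  refine ⟨⟨?_, ?_⟩, ?_, ?_, hφ1, ?_⟩
  · intro A B
    simp only [hφ, Matrix.transpose_add, Matrix.mul_add, Matrix.add_mul, smul_add]
  · intro c A
    simp only [hφ, Matrix.transpose_smul, Matrix.mul_smul, Matrix.smul_mul, smul_smul]
    rw [mul_comm]
  · -- bijective
    apply Function.bijective_iff_has_inverse.mpr
    refine ⟨fun S => α⁻¹ • (U⁻¹ * (D⁻¹ * S) * U)ᵀ, ?_, ?_⟩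
    · intro T
      simp only [hφ, Matrix.mul_smul, Matrix.smul_mul, Matrix.transpose_smul,
        smul_smul, Matrix.mul_assoc, hDD2, hUU', hUU2, mul_one,
        Matrix.transpose_transpose, inv_mul_cancel₀ hα, one_smul]
    · intro S
      simp only [hφ, Matrix.transpose_smul, Matrix.transpose_transpose,
        Matrix.mul_smul, Matrix.smul_mul, smul_smul, Matrix.mul_assoc,
        hUU, hUU2', hDD2', mul_one, mul_inv_cancel₀ hα, one_smul]
  · intro A B hAB
    have hdet : IsUnit (A.det * B.det) := by rw [← Matrix.det_mul, hAB]; exact hCd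
    have hAd : IsUnit Aᵀ.det := by
      rw [Matrix.det_transpose]; exact isUnit_of_mul_isUnit_left hdet
    have hBd : IsUnit Bᵀ.det := by
      rw [Matrix.det_transpose]; exact isUnit_of_mul_isUnit_right hdet
    have hCt : Cᵀ = Bᵀ * Aᵀ := by rw [← hAB, Matrix.transpose_mul]
    have h1 : (α ^ 2) • (U⁻¹ * D * U * Cᵀ) = 1 := by
      have e : U⁻¹ * ((α ^ 2) • (D * (U * Cᵀ * U⁻¹))) * U
          = (α ^ 2) • (U⁻¹ * D * U * Cᵀ) := by
        simp only [Matrix.mul_smul, Matrix.smul_mul, Matrix.mul_assoc, hUU', mul_one]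
      rw [← e, hkey, mul_one, hUU']
    rw [hCt] at h1
    have h2 : ((α ^ 2) • (U⁻¹ * D * U * Bᵀ)) * Aᵀ = 1 := by
      simp only [Matrix.smul_mul, Matrix.mul_assoc] at h1 ⊢
      exact h1
    have h3 : Aᵀ * ((α ^ 2) • (U⁻¹ * D * U * Bᵀ)) = 1 := mul_eq_one_comm.mp h2
    have hX : (α ^ 2) • (Aᵀ * (U⁻¹ * D * U) * Bᵀ) = 1 := by
      simp only [Matrix.mul_smul, Matrix.smul_mul, Matrix.mul_assoc] at h3 ⊢
      exact h3
    calc φ A * φ B = D * U * ((α ^ 2) • (Aᵀ * (U⁻¹ * D * U) * Bᵀ)) * U⁻¹ := by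
          simp only [hφ, Matrix.mul_smul, Matrix.smul_mul, smul_smul,
            Matrix.mul_assoc, pow_two]
      _ = D := by rw [hX, mul_one, Matrix.mul_assoc, hUU, mul_one]
  · intro A B
    have hinv : Ring.inverse (φ 1) = α⁻¹ • D⁻¹ := by
      rw [hφ1, ← Matrix.nonsing_inv_eq_ringInverse]
      apply Matrix.inv_eq_right_inv
      rw [Matrix.smul_mul, Matrix.mul_smul, smul_smul, mul_inv_cancel₀ hα, hDD, one_smul]
    rw [hinv]
    simp only [hφ, Matrix.transpose_mul, Matrix.mul_smul, Matrix.smul_mul,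
      smul_smul, Matrix.mul_assoc, hDD2, hUU2, inv_mul_cancel₀ hα, mul_inv_cancel₀ hα, one_smul, one_mul,
      mul_one]
end

section
/- Let A and B be unital associative algebras, fix c ∈ A and d ∈ B, and let φ: A → B be a linear map such that φ(a)φ(b) = d whenever ab = c. Then for every x ∈ A with xc = 0, one has φ(x)φ(c) = 0; and for every x ∈ A with cx = 0, one has φ(c)φ(x) = 0. -/
/-- If a linear map `φ` preserves products at `(c, d)`, then `x * c = 0`
implies `φ x * φ c = 0` and `c * x = 0` implies `φ c * φ x = 0`. -/
theorem stmt19 {A B : Type*} [Ring A] [Algebra ℂ A] [Ring B] [Algebra ℂ B]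
    (c : A) (d : B) (φ : A →ₗ[ℂ] B)
    (h : ∀ a b : A, a * b = c → φ a * φ b = d) :
    (∀ x : A, x * c = 0 → φ x * φ c = 0) ∧ (∀ x : A, c * x = 0 → φ c * φ x = 0) := by
  constructor
  · intro x hx
    have h1 : φ (1 + x) * φ c = d := h _ _ (by rw [add_mul, one_mul, hx, add_zero])
    have h2 : φ 1 * φ c = d := h _ _ (one_mul c)
    rw [map_add, add_mul, h2] at h1
    exact add_eq_left.mp h1
  · intro x hx
    have h1 : φ c * φ (1 + x) = d := h _ _ (by rw [mul_add, mul_one, hx, add_zero])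
    have h2 : φ c * φ 1 = d := h _ _ (mul_one c)
    rw [map_add, mul_add, h2] at h1
    exact add_eq_left.mp h1
end
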